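/- arXiv:math/0408094 — 3 statements merged into one kernel-verified Lean document; each statement's English description precedes it below -/
import Mathlib

section
/- Let H be a Hopf algebra over a field k with bijective antipode S, and let X be a left H-module/comodule satisfying the anti-Yetter-Drinfeld condition. Then x_(-1)·x_(0) = x for all x ∈ X if and only if S(x_(-1))·x_(0) = x for all x ∈ X. -/
open TensorProduct PiTensorProduct

noncomputable section

variable (k : Type*) [Field k]

section AuxHopf

open Coalgebra

variable {K : Type*} [Field K]

lemma finsetEnum {α : Type*} (s : Finset α) :
    ∃ (m : ℕ) (g : Fin m → α), ∀ (β : Type*) [AddCommMonoid β] (f : α → β),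
      ∑ x ∈ s, f x = ∑ j, f (g j) := by
  classical
  refine ⟨s.card, fun j => (s.equivFin.symm j : α), fun β _ f => ?_⟩
  rw [← Finset.sum_coe_sort s f, ← Equiv.sum_comp s.equivFin.symm (fun x : s => f x)]

lemma existsFinRep {M N : Type*} [AddCommGroup M] [Module K M] [AddCommGroup N] [Module K N]
    (x : M ⊗[K] N) : ∃ (m : ℕ) (a : Fin m → M) (b : Fin m → N), x = ∑ i, a i ⊗ₜ[K] b i := by
  obtain ⟨s, hs⟩ := TensorProduct.exists_finset x
  obtain ⟨m, g, hg⟩ := finsetEnum s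
  exact ⟨m, fun j => (g j).1, fun j => (g j).2, by rw [hs, hg]⟩

variable {H : Type*} [Ring H] [HopfAlgebra K H]

lemma counit_smul_right {x : H} {ι : Type*} (r : Coalgebra.Repr K x ι) :
    ∑ i ∈ r.index, counit (R := K) (r.left i) • r.right i = x := by
  have h := congrArg (TensorProduct.lid K H) (sum_counit_tmul_eq r)
  simp only [map_sum, TensorProduct.lid_tmul, one_smul] at h
  exact h

lemma counit_smul_left {x : H} {ι : Type*} (r : Coalgebra.Repr K x ι) :
    ∑ i ∈ r.index, counit (R := K) (r.right i) • r.left i = x := by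
  have h := congrArg (TensorProduct.rid K H) (sum_tmul_counit_eq r)
  simp only [map_sum, TensorProduct.rid_tmul, one_smul] at h
  exact h

lemma antipode_one' : HopfAlgebra.antipode (R := K) (1 : H) = 1 := by
  have := HopfAlgebra.mul_antipode_rTensor_comul_apply (R := K) (A := H) 1
  simpa [Algebra.TensorProduct.one_def] using this

/-- `∑ S(x₁) x₂' ⊗ x₂'' = 1 ⊗ x`. -/
lemma sum_L {x : H} {ι κ : Type*} (r : Coalgebra.Repr K x ι)
    (r2 : ∀ i : r.ι, Coalgebra.Repr K (r.right i) κ) :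
    ∑ i ∈ r.index, ∑ p ∈ (r2 i).index,
      (HopfAlgebra.antipode (R := K) (r.left i) * (r2 i).left p) ⊗ₜ[K] (r2 i).right p
      = (1 : H) ⊗ₜ[K] x := by
  classical
  set r1 : ∀ i : r.ι, Coalgebra.Repr K (r.left i) (H × H) := fun i => Repr.arbitrary K (r.left i) with hr1
  have key := sum_tmul_tmul_eq (R := K) r r1 r2
  set W : H ⊗[K] (H ⊗[K] H) →ₗ[K] H ⊗[K] H :=
    (LinearMap.rTensor H (LinearMap.mul' K H ∘ₗ
        LinearMap.rTensor H (HopfAlgebra.antipode (R := K)))) ∘ₗ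
      (TensorProduct.assoc K H H H).symm.toLinearMap with hW
  have key2 := congrArg W key
  simp only [map_sum, hW, LinearMap.comp_apply, LinearEquiv.coe_coe,
    TensorProduct.assoc_symm_tmul, LinearMap.rTensor_tmul, LinearMap.mul'_apply] at key2
  rw [← key2]
  have inner : ∀ i : r.ι, ∑ j ∈ (r1 i).index,
      (HopfAlgebra.antipode (R := K) ((r1 i).left j) * (r1 i).right j) ⊗ₜ[K] (r.right i)
        = counit (R := K) (r.left i) • ((1:H) ⊗ₜ[K] r.right i) := by
    intro i
    rw [← TensorProduct.sum_tmul, HopfAlgebra.sum_antipode_mul_eq_smul (r1 i)]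
    simp [TensorProduct.smul_tmul']
  rw [Finset.sum_congr rfl fun i _ => inner i]
  simp only [← TensorProduct.tmul_smul]
  rw [← TensorProduct.tmul_sum, counit_smul_right r]

/-- Product of two comul representations. -/
def mulRepr {u v : H} {ι κ : Type*} (r1 : Coalgebra.Repr K u ι) (r2 : Coalgebra.Repr K v κ) :
    Coalgebra.Repr K (u * v) (ι × κ) where
  index := r1.index ×ˢ r2.index
  left p := r1.left p.1 * r2.left p.2
  right p := r1.right p.1 * r2.right p.2
  eq := by
    rw [Finset.sum_product, Bialgebra.comul_mul, ← r1.eq, ← r2.eq, Finset.sum_mul_sum]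
    simp [Algebra.TensorProduct.tmul_mul_tmul]

theorem antipode_mul' (a b : H) :
    HopfAlgebra.antipode (R := K) (a * b)
      = HopfAlgebra.antipode (R := K) b * HopfAlgebra.antipode (R := K) a := by
  classical
  set ra := Repr.arbitrary K a with hra
  set rb := Repr.arbitrary K b with hrb
  set r2a : ∀ i : ra.ι, Coalgebra.Repr K (ra.right i) (H × H) := fun i => Repr.arbitrary K _ with hr2a
  set r2b : ∀ j : rb.ι, Coalgebra.Repr K (rb.right j) (H × H) := fun j => Repr.arbitrary K _ with hr2b
  have hSa : HopfAlgebra.antipode (R := K) a = ∑ i ∈ ra.index,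
      counit (R := K) (ra.right i) • HopfAlgebra.antipode (R := K) (ra.left i) := by
    conv_lhs => rw [← counit_smul_left ra]
    rw [map_sum]
    simp only [map_smul]
  have hSb : HopfAlgebra.antipode (R := K) b = ∑ j ∈ rb.index,
      counit (R := K) (rb.right j) • HopfAlgebra.antipode (R := K) (rb.left j) := by
    conv_lhs => rw [← counit_smul_left rb]
    rw [map_sum]
    simp only [map_smul]
  have step1 : HopfAlgebra.antipode (R := K) b * HopfAlgebra.antipode (R := K) a
      = ∑ j ∈ rb.index, ∑ i ∈ ra.index,
      (HopfAlgebra.antipode (R := K) (rb.left j) * HopfAlgebra.antipode (R := K) (ra.left i)) *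
        (counit (R := K) (ra.right i * rb.right j) • (1:H)) := by
    rw [hSa, hSb, Finset.sum_mul_sum]
    refine Finset.sum_congr rfl fun j _ => Finset.sum_congr rfl fun i _ => ?_
    rw [Bialgebra.counit_mul]
    rw [smul_mul_assoc, mul_smul_comm, mul_smul_comm, mul_one, smul_smul,
      mul_comm (counit (R := K) (rb.right j)) (counit (R := K) (ra.right i))]
  have step2 : HopfAlgebra.antipode (R := K) b * HopfAlgebra.antipode (R := K) a
      = ∑ j ∈ rb.index, ∑ i ∈ ra.index,
      ∑ p ∈ (r2a i).index, ∑ q ∈ (r2b j).index,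
      (HopfAlgebra.antipode (R := K) (rb.left j) * HopfAlgebra.antipode (R := K) (ra.left i)) *
        (((r2a i).left p * (r2b j).left q) *
          HopfAlgebra.antipode (R := K) ((r2a i).right p * (r2b j).right q)) := by
    rw [step1]
    refine Finset.sum_congr rfl fun j _ => Finset.sum_congr rfl fun i _ => ?_
    rw [← HopfAlgebra.sum_mul_antipode_eq_smul (mulRepr (r2a i) (r2b j))]
    show _ = ∑ p ∈ (r2a i).index, ∑ q ∈ (r2b j).index, _
    rw [← Finset.sum_product', Finset.mul_sum]
    rfl
  have step3 : HopfAlgebra.antipode (R := K) b * HopfAlgebra.antipode (R := K) a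
      = ∑ j ∈ rb.index, ∑ q ∈ (r2b j).index,
      HopfAlgebra.antipode (R := K) (rb.left j) *
        ((r2b j).left q * HopfAlgebra.antipode (R := K) (a * (r2b j).right q)) := by
    rw [step2]
    refine Finset.sum_congr rfl fun j hj => ?_
    rw [Finset.sum_congr rfl fun i (_ : i ∈ ra.index) => Finset.sum_comm, Finset.sum_comm]
    refine Finset.sum_congr rfl fun q hq => ?_
    set Φ : H ⊗[K] H →ₗ[K] H := TensorProduct.lift (LinearMap.mk₂ K
      (fun u v => HopfAlgebra.antipode (R := K) (rb.left j) *
        (u * ((r2b j).left q * HopfAlgebra.antipode (R := K) (v * (r2b j).right q))))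
      (by intros; simp [add_mul, mul_add])
      (by intros; simp [smul_mul_assoc, mul_smul_comm])
      (by intros; simp [add_mul, map_add, mul_add])
      (by intros; simp [smul_mul_assoc, map_smul, mul_smul_comm])) with hΦ
    have hΦt : ∀ u v : H, Φ (u ⊗ₜ[K] v)
        = HopfAlgebra.antipode (R := K) (rb.left j) *
          (u * ((r2b j).left q * HopfAlgebra.antipode (R := K) (v * (r2b j).right q))) := by
      intro u v; simp [hΦ]
    have : ∑ i ∈ ra.index, ∑ p ∈ (r2a i).index,
        HopfAlgebra.antipode (R := K) (rb.left j) * HopfAlgebra.antipode (R := K) (ra.left i) *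
          ((r2a i).left p * (r2b j).left q *
            HopfAlgebra.antipode (R := K) ((r2a i).right p * (r2b j).right q))
        = Φ (∑ i ∈ ra.index, ∑ p ∈ (r2a i).index,
            (HopfAlgebra.antipode (R := K) (ra.left i) * (r2a i).left p) ⊗ₜ[K]
              (r2a i).right p) := by
      rw [map_sum]
      refine Finset.sum_congr rfl fun i _ => ?_
      rw [map_sum]
      refine Finset.sum_congr rfl fun p _ => ?_
      rw [hΦt]
      simp [mul_assoc]
    rw [this, sum_L ra r2a, hΦt, one_mul]
  set Ψ : H ⊗[K] H →ₗ[K] H := TensorProduct.lift (LinearMap.mk₂ K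
      (fun u v => u * HopfAlgebra.antipode (R := K) (a * v))
      (by intros; simp [add_mul])
      (by intros; simp [smul_mul_assoc])
      (by intros; simp [mul_add, map_add])
      (by intros; simp [mul_smul_comm, map_smul])) with hΨ
  have hΨt : ∀ u v : H, Ψ (u ⊗ₜ[K] v) = u * HopfAlgebra.antipode (R := K) (a * v) := by
    intro u v; simp [hΨ]
  have final : HopfAlgebra.antipode (R := K) b * HopfAlgebra.antipode (R := K) a
      = Ψ ((1:H) ⊗ₜ[K] b) := by
    rw [step3, ← sum_L rb r2b, map_sum]
    refine Finset.sum_congr rfl fun j _ => ?_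
    rw [map_sum]
    refine Finset.sum_congr rfl fun q _ => ?_
    rw [hΨt]
    simp [mul_assoc]
  rw [final, hΨt, one_mul]

lemma sum_Sinv {Sinv : H →ₗ[K] H}
    (hSinv₁ : ∀ h : H, Sinv (HopfAlgebra.antipode (R := K) h) = h)
    (hSinv₂ : ∀ h : H, HopfAlgebra.antipode (R := K) (Sinv h) = h)
    {x : H} {ι : Type*} (r : Coalgebra.Repr K x ι) :
    ∑ p ∈ r.index, Sinv (r.right p) * r.left p = counit (R := K) x • 1 := by
  have hS : HopfAlgebra.antipode (R := K) (∑ p ∈ r.index, Sinv (r.right p) * r.left p)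
      = HopfAlgebra.antipode (R := K) ((counit (R := K) x) • (1:H)) := by
    rw [map_sum, map_smul, antipode_one']
    calc ∑ p ∈ r.index, HopfAlgebra.antipode (R := K) (Sinv (r.right p) * r.left p)
        = ∑ p ∈ r.index, HopfAlgebra.antipode (R := K) (r.left p) * r.right p := by
          refine Finset.sum_congr rfl fun p _ => ?_
          rw [antipode_mul', hSinv₂]
      _ = counit (R := K) x • 1 := HopfAlgebra.sum_antipode_mul_eq_smul r
  have := congrArg Sinv hS
  rwa [hSinv₁, hSinv₁] at this

lemma sum_I2 {Sinv : H →ₗ[K] H}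
    (hSinv₁ : ∀ h : H, Sinv (HopfAlgebra.antipode (R := K) h) = h)
    (hSinv₂ : ∀ h : H, HopfAlgebra.antipode (R := K) (Sinv h) = h)
    {x : H} {ι κ : Type*} (r : Coalgebra.Repr K x ι)
    (r2 : ∀ i : r.ι, Coalgebra.Repr K (r.right i) κ) :
    ∑ i ∈ r.index, ∑ p ∈ (r2 i).index,
      (r.left i) ⊗ₜ[K] (Sinv ((r2 i).right p) * (r2 i).left p) = x ⊗ₜ[K] (1:H) := by
  have inner : ∀ i : r.ι, ∑ p ∈ (r2 i).index,
      (r.left i) ⊗ₜ[K] (Sinv ((r2 i).right p) * (r2 i).left p)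
      = counit (R := K) (r.right i) • ((r.left i) ⊗ₜ[K] (1:H)) := by
    intro i
    rw [← TensorProduct.tmul_sum, sum_Sinv hSinv₁ hSinv₂ (r2 i), TensorProduct.tmul_smul]
  rw [Finset.sum_congr rfl fun i _ => inner i]
  simp only [TensorProduct.smul_tmul']
  rw [← TensorProduct.sum_tmul, counit_smul_left r]

end AuxHopf


/-- The `k`-linear map `H ⊗ H^{⊗n} → H^{⊗(n+1)}` prepending a tensor factor. -/
def consT (H : Type*) [AddCommGroup H] [Module k H] (n : ℕ) :
    H ⊗[k] (PiTensorProduct k fun _ : Fin n => H) →ₗ[k]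
      PiTensorProduct k fun _ : Fin (n+1) => H :=
  TensorProduct.lift
    (PiTensorProduct.lift.toLinearMap ∘ₗ
      (multilinearCurryLeftEquiv k (fun _ : Fin (n+1) => H)
        (PiTensorProduct k fun _ : Fin (n+1) => H)) (PiTensorProduct.tprod k))

/-- Iterated comultiplication `Δ^{(n)} : H → H^{⊗(n+1)}`, with `n+1` Sweedler legs. -/
def itComul (H : Type*) [AddCommGroup H] [Module k H] [CoalgebraStruct k H] :
    (n : ℕ) → H →ₗ[k] PiTensorProduct k fun _ : Fin (n+1) => H
  | 0 =>
      letI : Subsingleton (Fin 1) := ⟨fun a b => Fin.ext (by omega)⟩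
      (PiTensorProduct.subsingletonEquiv (R := k) (s := fun _ : Fin 1 => H) (0 : Fin 1)).symm.toLinearMap
  | n+1 => consT k H (n+1) ∘ₗ
      TensorProduct.map LinearMap.id (itComul H n) ∘ₗ Coalgebra.comul

/-- Iterated coaction `Y → H^{⊗n} ⊗ Y` of a left `H`-comodule. -/
def itCoact (H Y : Type*) [AddCommGroup H] [Module k H]
    [AddCommGroup Y] [Module k Y] (ρ : Y →ₗ[k] H ⊗[k] Y) :
    (n : ℕ) → Y →ₗ[k] (PiTensorProduct k fun _ : Fin n => H) ⊗[k] Y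
  | 0 =>
      TensorProduct.map
        ((PiTensorProduct.isEmptyEquiv (Fin 0)).symm.toLinearMap) LinearMap.id ∘ₗ
        (TensorProduct.lid k Y).symm.toLinearMap
  | n+1 =>
      TensorProduct.map (consT k H n) LinearMap.id ∘ₗ
        (TensorProduct.assoc k H (PiTensorProduct k fun _ : Fin n => H) Y).symm.toLinearMap ∘ₗ
        TensorProduct.map LinearMap.id (itCoact H Y ρ n) ∘ₗ ρ


section AuxPi

lemma consT_tmul {H : Type*} [AddCommGroup H] [Module k H] (n : ℕ) (h : H) (f : Fin n → H) :
    consT k H n (h ⊗ₜ[k] PiTensorProduct.tprod k f) = PiTensorProduct.tprod k (Fin.cons h f) := by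
  simp [consT, multilinearCurryLeftEquiv]
  rfl

lemma itComul_zero {H : Type*} [AddCommGroup H] [Module k H] [CoalgebraStruct k H] (x : H) :
    itComul k H 0 x = PiTensorProduct.tprod k (fun _ : Fin 1 => x) :=
  PiTensorProduct.subsingletonEquiv_symm_apply' (0 : Fin 1) x

lemma itComul_two {H : Type*} [Ring H] [HopfAlgebra k H] {h : H}
    {ι κ : Type*} (r : Coalgebra.Repr k h ι) (r2 : ∀ i : r.ι, Coalgebra.Repr k (r.right i) κ) :
    itComul k H 2 h = ∑ i ∈ r.index, ∑ p ∈ (r2 i).index,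
      PiTensorProduct.tprod k (Fin.cons (r.left i)
        (Fin.cons ((r2 i).left p) (fun _ => (r2 i).right p))) := by
  have h1 : ∀ x : H, ∀ rx : Coalgebra.Repr k x κ, itComul k H 1 x = ∑ p ∈ rx.index,
      PiTensorProduct.tprod k (Fin.cons (rx.left p) (fun _ => rx.right p)) := by
    intro x rx
    show (consT k H 1 ∘ₗ TensorProduct.map LinearMap.id (itComul k H 0) ∘ₗ
      Coalgebra.comul) x = _
    rw [LinearMap.comp_apply, LinearMap.comp_apply, ← rx.eq, map_sum, map_sum]
    refine Finset.sum_congr rfl fun p _ => ?_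
    rw [TensorProduct.map_tmul, LinearMap.id_apply, itComul_zero, consT_tmul]
  show (consT k H 2 ∘ₗ TensorProduct.map LinearMap.id (itComul k H 1) ∘ₗ
    Coalgebra.comul) h = _
  rw [LinearMap.comp_apply, LinearMap.comp_apply, ← r.eq, map_sum, map_sum]
  refine Finset.sum_congr rfl fun i _ => ?_
  rw [TensorProduct.map_tmul, LinearMap.id_apply, h1 (r.right i) (r2 i),
    TensorProduct.tmul_sum, map_sum]
  refine Finset.sum_congr rfl fun p _ => ?_
  rw [consT_tmul]

end AuxPi


set_option maxHeartbeats 2000000 in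
/-- for an anti-Yetter-Drinfeld module `X`, `x_(-1)·x_(0) = x` for all `x`
iff `S(x_(-1))·x_(0) = x` for all `x`. -/
theorem statement6
    {H : Type*} [Ring H] [HopfAlgebra k H]
    (Sinv : H →ₗ[k] H)
    (hSinv₁ : ∀ h : H, Sinv (HopfAlgebra.antipode (R := k) h) = h)
    (hSinv₂ : ∀ h : H, HopfAlgebra.antipode (R := k) (Sinv h) = h)
    {Y : Type*} [AddCommGroup Y] [Module k Y] [Module H Y] [IsScalarTower k H Y]
    (ρ : Y →ₗ[k] H ⊗[k] Y)
    (hρ_coassoc :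
      (TensorProduct.assoc k H H Y).toLinearMap ∘ₗ
        TensorProduct.map Coalgebra.comul LinearMap.id ∘ₗ ρ =
      TensorProduct.map LinearMap.id ρ ∘ₗ ρ)
    (hρ_counit :
      (TensorProduct.lid k Y).toLinearMap ∘ₗ
        TensorProduct.map Coalgebra.counit LinearMap.id ∘ₗ ρ = LinearMap.id)
    (haYD : ∀ (h : H) (y : Y) (m : ℕ) (a : Fin m → H) (b : Fin m → Y)
      (m' : ℕ) (g : Fin m' → Fin 3 → H),
      ρ y = ∑ i, a i ⊗ₜ[k] b i →
      itComul k H 2 h = ∑ i, PiTensorProduct.tprod k (g i) →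
      ρ (h • y) = ∑ i, ∑ l, (g i 0 * a l * Sinv (g i 2)) ⊗ₜ[k] (g i 1 • b l))
 :
    (∀ (y : Y) (m : ℕ) (a : Fin m → H) (b : Fin m → Y),
      ρ y = ∑ i, a i ⊗ₜ[k] b i → ∑ i, a i • b i = y) ↔
    (∀ (y : Y) (m : ℕ) (a : Fin m → H) (b : Fin m → Y),
      ρ y = ∑ i, a i ⊗ₜ[k] b i →
      ∑ i, HopfAlgebra.antipode (R := k) (a i) • b i = y) := by
  classical
  -- the action as a linear map on the tensor product
  obtain ⟨act, hact⟩ : ∃ act : H ⊗[k] Y →ₗ[k] Y, ∀ (u : H) (z : Y), act (u ⊗ₜ[k] z) = u • z :=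
    ⟨TensorProduct.lift (LinearMap.mk₂ k (fun (u : H) (z : Y) => u • z)
      (fun u u' z => add_smul u u' z) (fun c u z => smul_assoc c u z)
      (fun u z z' => smul_add u z z') (fun c u z => smul_comm u c z)),
     fun u z => by simp⟩
  -- sandwich maps
  obtain ⟨sand, hsand⟩ : ∃ sand : H → Y → (H ⊗[k] H →ₗ[k] Y),
      ∀ (x : H) (z : Y) (u w : H), sand x z (u ⊗ₜ[k] w) = (u * (x * w)) • z :=
    ⟨fun x z => TensorProduct.lift (LinearMap.mk₂ k (fun u w => (u * (x * w)) • z)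
      (by intros; simp [add_mul, add_smul])
      (by intros; simp [smul_mul_assoc, smul_assoc])
      (by intros; simp [mul_add, add_smul])
      (by intros; simp [mul_smul_comm, smul_assoc])),
     fun x z u w => by simp⟩
  obtain ⟨E1, hE1⟩ : ∃ E1 : H ⊗[k] (H ⊗[k] Y) →ₗ[k] Y,
      ∀ (u v : H) (z : Y), E1 (u ⊗ₜ[k] (v ⊗ₜ[k] z))
        = (u * HopfAlgebra.antipode (R := k) v) • z :=
    ⟨act ∘ₗ LinearMap.rTensor Y (LinearMap.mul' k H ∘ₗ
        LinearMap.lTensor H (HopfAlgebra.antipode (R := k))) ∘ₗ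
      (TensorProduct.assoc k H H Y).symm.toLinearMap,
     fun u v z => by simp [hact]⟩
  obtain ⟨E2, hE2⟩ : ∃ E2 : H ⊗[k] (H ⊗[k] Y) →ₗ[k] Y,
      ∀ (u v : H) (z : Y), E2 (u ⊗ₜ[k] (v ⊗ₜ[k] z))
        = (HopfAlgebra.antipode (R := k) u * v) • z :=
    ⟨act ∘ₗ LinearMap.rTensor Y (LinearMap.mul' k H ∘ₗ
        LinearMap.rTensor H (HopfAlgebra.antipode (R := k))) ∘ₗ
      (TensorProduct.assoc k H H Y).symm.toLinearMap,
     fun u v z => by simp [hact]⟩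
  -- good representations of the iterated comultiplication
  have hrepItComul : ∀ h : H, ∃ (m' : ℕ) (g : Fin m' → Fin 3 → H),
      itComul k H 2 h = ∑ j, PiTensorProduct.tprod k (g j) ∧
      ∑ j, (g j 2) ⊗ₜ[k] (HopfAlgebra.antipode (R := k) (g j 0) * g j 1) = h ⊗ₜ[k] (1:H) ∧
      ∑ j, (g j 0) ⊗ₜ[k] (Sinv (g j 2) * g j 1) = h ⊗ₜ[k] (1:H) := by
    intro h
    set r := Coalgebra.Repr.arbitrary k h with hr
    set r2 : ∀ i : r.ι, Coalgebra.Repr k (r.right i) (H × H) :=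
      fun i => Coalgebra.Repr.arbitrary k _ with hr2
    obtain ⟨m', e, he⟩ := finsetEnum (r.index.sigma fun i => (r2 i).index)
    set F : ((i : r.ι) × (r2 i).ι) →
        (PiTensorProduct k fun _ : Fin 3 => H) × ((H ⊗[k] H) × (H ⊗[k] H)) := fun x =>
      (PiTensorProduct.tprod k (Fin.cons (r.left x.1)
          (Fin.cons ((r2 x.1).left x.2) (fun _ => (r2 x.1).right x.2))),
       ((r2 x.1).right x.2 ⊗ₜ[k]
          (HopfAlgebra.antipode (R := k) (r.left x.1) * (r2 x.1).left x.2),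
        (r.left x.1) ⊗ₜ[k] (Sinv ((r2 x.1).right x.2) * (r2 x.1).left x.2))) with hF
    have hsum := he _ F
    have h1 := congrArg Prod.fst hsum
    have h2 := congrArg (fun z => z.2.1) hsum
    have h3 := congrArg (fun z => z.2.2) hsum
    simp only [Prod.fst_sum, Prod.snd_sum, hF] at h1 h2 h3
    rw [Finset.sum_sigma] at h1 h2 h3
    refine ⟨m', fun j => Fin.cons (r.left (e j).1)
      (Fin.cons ((r2 (e j).1).left (e j).2) (fun _ => (r2 (e j).1).right (e j).2)), ?_, ?_, ?_⟩
    · rw [itComul_two k r r2]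
      exact h1
    · show (∑ j : Fin m', (r2 (e j).1).right (e j).2 ⊗ₜ[k]
        (HopfAlgebra.antipode (R := k) (r.left (e j).1) * (r2 (e j).1).left (e j).2))
        = h ⊗ₜ[k] (1:H)
      rw [← h2]
      have := congrArg (TensorProduct.comm k H H) (sum_L r r2)
      simpa only [map_sum, TensorProduct.comm_tmul] using this
    · show (∑ j : Fin m', (r.left (e j).1) ⊗ₜ[k]
        (Sinv ((r2 (e j).1).right (e j).2) * (r2 (e j).1).left (e j).2)) = h ⊗ₜ[k] (1:H)
      rw [← h3]
      exact sum_I2 hSinv₁ hSinv₂ r r2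
  -- consequences of the aYD condition
  have key : ∀ (h : H) (y : Y) (m : ℕ) (a : Fin m → H) (b : Fin m → Y),
      ρ y = ∑ l, a l ⊗ₜ[k] b l →
      act (ρ (h • y)) = (∑ l, (h * a l) • b l) ∧
      act (TensorProduct.map (HopfAlgebra.antipode (R := k)) LinearMap.id (ρ (h • y)))
        = ∑ l, (h * HopfAlgebra.antipode (R := k) (a l)) • b l := by
    intro h y m a b hrep
    obtain ⟨m', g, hg, hI1, hI2⟩ := hrepItComul h
    have hρhy := haYD h y m a b m' g hrep hg
    constructor
    · rw [hρhy, map_sum]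
      simp only [map_sum, hact]
      rw [Finset.sum_comm]
      have hterm : ∀ l, ∑ j, (g j 0 * a l * Sinv (g j 2)) • (g j 1 • b l)
          = sand (a l) (b l) (∑ j, (g j 0) ⊗ₜ[k] (Sinv (g j 2) * g j 1)) := by
        intro l; rw [map_sum]
        refine Finset.sum_congr rfl fun j _ => ?_
        rw [hsand, smul_smul]
        congr 1
        simp [mul_assoc]
      rw [Finset.sum_congr rfl fun l _ => hterm l]
      simp only [hI2, hsand, mul_one]
    · have expand : act (TensorProduct.map (HopfAlgebra.antipode (R := k))
          LinearMap.id (ρ (h • y))) =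
          ∑ j, ∑ l, (HopfAlgebra.antipode (R := k) (g j 0 * a l * Sinv (g j 2)))
            • (g j 1 • b l) := by
        rw [hρhy]
        simp only [map_sum, TensorProduct.map_tmul, LinearMap.id_coe, id_eq, hact]
      rw [expand, Finset.sum_comm]
      have hterm : ∀ l, ∑ j, HopfAlgebra.antipode (R := k) (g j 0 * a l * Sinv (g j 2))
            • (g j 1 • b l)
          = sand (HopfAlgebra.antipode (R := k) (a l)) (b l)
              (∑ j, (g j 2) ⊗ₜ[k] (HopfAlgebra.antipode (R := k) (g j 0) * g j 1)) := by
        intro l; rw [map_sum]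
        refine Finset.sum_congr rfl fun j _ => ?_
        rw [hsand, smul_smul]
        congr 1
        rw [antipode_mul', antipode_mul', hSinv₂]
        simp [mul_assoc]
      rw [Finset.sum_congr rfl fun l _ => hterm l]
      simp only [hI1, hsand, mul_one]
  -- pointwise counit property
  have hcounit_pt : ∀ (y : Y) (m : ℕ) (a : Fin m → H) (b : Fin m → Y),
      ρ y = ∑ l, a l ⊗ₜ[k] b l →
      ∑ l, Coalgebra.counit (R := k) (a l) • b l = y := by
    intro y m a b hrep
    have h0 := LinearMap.congr_fun hρ_counit y
    rw [LinearMap.comp_apply, LinearMap.comp_apply, hrep] at h0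
    simpa only [map_sum, TensorProduct.map_tmul, LinearMap.id_coe, id_eq,
      LinearEquiv.coe_coe, TensorProduct.lid_tmul, LinearMap.id_apply] using h0
  -- pointwise coassociativity
  have hco : ∀ (y : Y) (m : ℕ) (a : Fin m → H) (b : Fin m → Y),
      ρ y = ∑ l, a l ⊗ₜ[k] b l →
      ∑ l, a l ⊗ₜ[k] ρ (b l) = ∑ l, (TensorProduct.assoc k H H Y)
        ((Coalgebra.comul (R := k) (a l)) ⊗ₜ[k] b l) := by
    intro y m a b hrep
    have h0 := LinearMap.congr_fun hρ_coassoc y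
    rw [LinearMap.comp_apply, LinearMap.comp_apply, LinearMap.comp_apply, hrep] at h0
    simp only [map_sum, TensorProduct.map_tmul, LinearMap.id_coe, id_eq,
      LinearEquiv.coe_coe] at h0
    exact h0.symm
  -- the two composition identities
  have comp1 : ∀ (y : Y) (m : ℕ) (a : Fin m → H) (b : Fin m → Y),
      ρ y = ∑ l, a l ⊗ₜ[k] b l →
      ∑ l, act (TensorProduct.map (HopfAlgebra.antipode (R := k)) LinearMap.id
        (ρ (a l • b l))) = y := by
    intro y m a b hrep
    choose mc c d hc using fun l => existsFinRep (ρ (b l))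
    calc ∑ l, act (TensorProduct.map (HopfAlgebra.antipode (R := k)) LinearMap.id
          (ρ (a l • b l)))
        = ∑ l, ∑ p, (a l * HopfAlgebra.antipode (R := k) (c l p)) • d l p :=
          Finset.sum_congr rfl fun l _ => (key (a l) (b l) (mc l) (c l) (d l) (hc l)).2
      _ = ∑ l, E1 (a l ⊗ₜ[k] ρ (b l)) := by
          refine Finset.sum_congr rfl fun l _ => ?_
          rw [hc l, TensorProduct.tmul_sum, map_sum]
          exact Finset.sum_congr rfl fun p _ => (hE1 _ _ _).symm
      _ = ∑ l, E1 ((TensorProduct.assoc k H H Y)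
            ((Coalgebra.comul (R := k) (a l)) ⊗ₜ[k] b l)) := by
          rw [← map_sum, hco y m a b hrep, map_sum]
      _ = ∑ l, Coalgebra.counit (R := k) (a l) • b l := by
          refine Finset.sum_congr rfl fun l _ => ?_
          set rl := Coalgebra.Repr.arbitrary k (a l) with hrl
          rw [← rl.eq, TensorProduct.sum_tmul, map_sum, map_sum]
          simp only [TensorProduct.assoc_tmul, hE1]
          rw [← Finset.sum_smul, HopfAlgebra.sum_mul_antipode_eq_smul rl,
            smul_assoc, one_smul]
      _ = y := hcounit_pt y m a b hrep
  have comp2 : ∀ (y : Y) (m : ℕ) (a : Fin m → H) (b : Fin m → Y),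
      ρ y = ∑ l, a l ⊗ₜ[k] b l →
      ∑ l, act (ρ (HopfAlgebra.antipode (R := k) (a l) • b l)) = y := by
    intro y m a b hrep
    choose mc c d hc using fun l => existsFinRep (ρ (b l))
    calc ∑ l, act (ρ (HopfAlgebra.antipode (R := k) (a l) • b l))
        = ∑ l, ∑ p, (HopfAlgebra.antipode (R := k) (a l) * c l p) • d l p :=
          Finset.sum_congr rfl fun l _ =>
            (key (HopfAlgebra.antipode (R := k) (a l)) (b l) (mc l) (c l) (d l) (hc l)).1
      _ = ∑ l, E2 (a l ⊗ₜ[k] ρ (b l)) := by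
          refine Finset.sum_congr rfl fun l _ => ?_
          rw [hc l, TensorProduct.tmul_sum, map_sum]
          exact Finset.sum_congr rfl fun p _ => (hE2 _ _ _).symm
      _ = ∑ l, E2 ((TensorProduct.assoc k H H Y)
            ((Coalgebra.comul (R := k) (a l)) ⊗ₜ[k] b l)) := by
          rw [← map_sum, hco y m a b hrep, map_sum]
      _ = ∑ l, Coalgebra.counit (R := k) (a l) • b l := by
          refine Finset.sum_congr rfl fun l _ => ?_
          set rl := Coalgebra.Repr.arbitrary k (a l) with hrl
          rw [← rl.eq, TensorProduct.sum_tmul, map_sum, map_sum]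
          simp only [TensorProduct.assoc_tmul, hE2]
          rw [← Finset.sum_smul, HopfAlgebra.sum_antipode_mul_eq_smul rl,
            smul_assoc, one_smul]
      _ = y := hcounit_pt y m a b hrep
  constructor
  · intro h1 y m a b hrep
    have hyy : y = ∑ l, a l • b l := (h1 y m a b hrep).symm
    have hTy : ∑ i, HopfAlgebra.antipode (R := k) (a i) • b i
        = act (TensorProduct.map (HopfAlgebra.antipode (R := k)) LinearMap.id (ρ y)) := by
      rw [hrep]
      simp only [map_sum, TensorProduct.map_tmul, LinearMap.id_coe, id_eq, hact]
    rw [hTy]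
    calc act (TensorProduct.map (HopfAlgebra.antipode (R := k)) LinearMap.id (ρ y))
        = act (TensorProduct.map (HopfAlgebra.antipode (R := k)) LinearMap.id
            (ρ (∑ l, a l • b l))) := by rw [← hyy]
      _ = ∑ l, act (TensorProduct.map (HopfAlgebra.antipode (R := k)) LinearMap.id
            (ρ (a l • b l))) := by simp only [map_sum]
      _ = y := comp1 y m a b hrep
  · intro h2 y m a b hrep
    have hyy : y = ∑ l, HopfAlgebra.antipode (R := k) (a l) • b l := (h2 y m a b hrep).symm
    have hTy : ∑ i, a i • b i = act (ρ y) := by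
      rw [hrep]
      simp only [map_sum, hact]
    rw [hTy]
    calc act (ρ y)
        = act (ρ (∑ l, HopfAlgebra.antipode (R := k) (a l) • b l)) := by rw [← hyy]
      _ = ∑ l, act (ρ (HopfAlgebra.antipode (R := k) (a l) • b l)) := by
          simp only [map_sum]
      _ = y := comp2 y m a b hrep
end
end

section
/- Let k be a field, H a Hopf algebra over k with bijective antipode S, and Y a left H-module/comodule that is 1-stable, i.e. S(y_(-1))·y_(0) = y for all y ∈ Y. Then p_n ∘ i_n = id on CM_n(H,Y) = H^{⊗n} ⊗ Y for every n ≥ 0; in particular each p_n is surjective. -/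
open TensorProduct PiTensorProduct

set_option synthInstance.maxHeartbeats 1000000
set_option maxHeartbeats 1600000

noncomputable section

variable (k : Type*) [Field k]

namespace Stmt7

variable {k}

theorem exists_sum_tmul {M N : Type*} [AddCommGroup M] [Module k M]
    [AddCommGroup N] [Module k N] (x : M ⊗[k] N) :
    ∃ (m : ℕ) (a : Fin m → M) (b : Fin m → N), x = ∑ i, a i ⊗ₜ[k] b i := by
  induction x using TensorProduct.induction_on with
  | zero => exact ⟨0, finZeroElim, finZeroElim, by simp⟩
  | tmul a b => exact ⟨1, fun _ => a, fun _ => b, by simp⟩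
  | add x y hx hy =>
    obtain ⟨m, a, b, rfl⟩ := hx
    obtain ⟨m', a', b', rfl⟩ := hy
    refine ⟨m + m', Fin.append a a', Fin.append b b', ?_⟩
    rw [Fin.sum_univ_add]
    simp [Fin.append_left, Fin.append_right]

theorem exists_sum_tprod {H : Type*} [AddCommGroup H] [Module k H] {n : ℕ}
    (x : ⨂[k] (_ : Fin (n+1)), H) :
    ∃ (m : ℕ) (g : Fin m → (Fin (n+1) → H)), x = ∑ i, PiTensorProduct.tprod k (g i) := by
  induction x using PiTensorProduct.induction_on with
  | smul_tprod r f =>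
    refine ⟨1, fun _ => Function.update f 0 (r • f 0), ?_⟩
    have h := MultilinearMap.map_update_smul (PiTensorProduct.tprod k (s := fun _ : Fin (n+1) => H)) f 0 r (f 0)
    rw [Function.update_eq_self] at h
    simp [h]
  | add x y hx hy =>
    obtain ⟨m, g, rfl⟩ := hx
    obtain ⟨m', g', rfl⟩ := hy
    refine ⟨m + m', Fin.append g g', ?_⟩
    rw [Fin.sum_univ_add]
    simp [Fin.append_left, Fin.append_right]

theorem exists_sum_tprod_tmul {H Y : Type*} [AddCommGroup H] [Module k H]
    [AddCommGroup Y] [Module k Y] {n : ℕ}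
    (x : (⨂[k] (_ : Fin n), H) ⊗[k] Y) :
    ∃ (m : ℕ) (c : Fin m → (Fin n → H)) (d : Fin m → Y),
      x = ∑ i, PiTensorProduct.tprod k (c i) ⊗ₜ[k] d i := by
  induction x using TensorProduct.induction_on with
  | zero => exact ⟨0, finZeroElim, finZeroElim, by simp⟩
  | tmul a b =>
    induction a using PiTensorProduct.induction_on with
    | smul_tprod r f =>
      exact ⟨1, fun _ => f, fun _ => r • b, by simp [smul_tmul]⟩
    | add x y hx hy =>
      obtain ⟨m, c, d, h1⟩ := hx
      obtain ⟨m', c', d', h2⟩ := hy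
      refine ⟨m + m', Fin.append c c', Fin.append d d', ?_⟩
      rw [add_tmul, h1, h2, Fin.sum_univ_add]
      simp [Fin.append_left, Fin.append_right]
  | add x y hx hy =>
    obtain ⟨m, c, d, rfl⟩ := hx
    obtain ⟨m', c', d', rfl⟩ := hy
    refine ⟨m + m', Fin.append c c', Fin.append d d', ?_⟩
    rw [Fin.sum_univ_add]
    simp [Fin.append_left, Fin.append_right]

section smulA

variable {H : Type*} [Ring H] [Algebra k H] {Y : Type*} [AddCommGroup Y] [Module k Y]
  [Module H Y] [IsScalarTower k H Y]

/-- action by `h` as a `k`-linear map. -/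
def smulA (h : H) : Y →ₗ[k] Y where
  toFun y := h • y
  map_add' := smul_add h
  map_smul' r y := by
    simp only [RingHom.id_apply]
    rw [← algebraMap_smul H r y, ← mul_smul, ← Algebra.commutes, mul_smul, algebraMap_smul]

@[simp] lemma smulA_apply (h : H) (y : Y) : smulA (k := k) h y = h • y := rfl

lemma smulA_add (h h' : H) : smulA (k := k) (Y := Y) (h + h') = smulA h + smulA h' := by
  ext y; simp [add_smul]

lemma smulA_smul (r : k) (h : H) : smulA (k := k) (Y := Y) (r • h) = r • smulA h := by
  ext y; simp [smul_assoc]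

end smulA

section snocT

variable (k) {H : Type*} [AddCommGroup H] [Module k H]

/-- append a tensor factor at the end -/
def snocT (n : ℕ) :
    (⨂[k] _ : Fin n, H) ⊗[k] H →ₗ[k] ⨂[k] _ : Fin (n+1), H :=
  TensorProduct.lift (PiTensorProduct.lift
    ((PiTensorProduct.tprod k (s := fun _ : Fin (n+1) => H)).curryRight))

@[simp] lemma snocT_tprod (n : ℕ) (f : Fin n → H) (h : H) :
    snocT k n (PiTensorProduct.tprod k f ⊗ₜ[k] h) = PiTensorProduct.tprod k (Fin.snoc f h) := by
  simp [snocT]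

@[simp] lemma consT_tprod (n : ℕ) (h : H) (f : Fin n → H) :
    consT k H n (h ⊗ₜ[k] PiTensorProduct.tprod k f) = PiTensorProduct.tprod k (Fin.cons h f) := by
  simp [consT, multilinearCurryLeftEquiv]
  rfl

end snocT


lemma piMap_update_add {H : Type*} [AddCommGroup H] [Module k H] {n : ℕ}
    (F : Fin n → (H →ₗ[k] H)) (j₀ : Fin n) (φ ψ : H →ₗ[k] H) :
    PiTensorProduct.map (Function.update F j₀ (φ + ψ)) =
      PiTensorProduct.map (Function.update F j₀ φ)
        + PiTensorProduct.map (Function.update F j₀ ψ) := by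
  ext x
  have h1 : ∀ (χ : H →ₗ[k] H), (fun j => Function.update F j₀ χ j (x j)) =
      Function.update (fun j => F j (x j)) j₀ (χ (x j₀)) := by
    intro χ; funext j
    by_cases hj : j = j₀
    · subst hj; simp
    · simp [Function.update_of_ne hj]
  simp only [LinearMap.compMultilinearMap_apply, PiTensorProduct.map_tprod, LinearMap.add_apply]
  rw [h1, h1, h1, LinearMap.add_apply, MultilinearMap.map_update_add]

lemma piMap_update_smul {H : Type*} [AddCommGroup H] [Module k H] {n : ℕ}
    (F : Fin n → (H →ₗ[k] H)) (j₀ : Fin n) (r : k) (φ : H →ₗ[k] H) :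
    PiTensorProduct.map (Function.update F j₀ (r • φ)) =
      r • PiTensorProduct.map (Function.update F j₀ φ) := by
  ext x
  have h1 : ∀ (χ : H →ₗ[k] H), (fun j => Function.update F j₀ χ j (x j)) =
      Function.update (fun j => F j (x j)) j₀ (χ (x j₀)) := by
    intro χ; funext j
    by_cases hj : j = j₀
    · subst hj; simp
    · simp [Function.update_of_ne hj]
  simp only [LinearMap.compMultilinearMap_apply, PiTensorProduct.map_tprod, LinearMap.smul_apply]
  rw [h1, h1, LinearMap.smul_apply, MultilinearMap.map_update_smul]

section Phi

variable {H : Type*} [Ring H] [HopfAlgebra k H] {Y : Type*} [AddCommGroup Y] [Module k Y]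
  [Module H Y] [IsScalarTower k H Y]

/-- the component family of `Phi`. -/
def phiFam (n : ℕ) (f : Fin n → H) (g : Fin (n+1) → H) : Fin n → (H →ₗ[k] H) :=
  fun j => LinearMap.mulRight k (f j) ∘ₗ
    LinearMap.mulLeft k (HopfAlgebra.antipode (R := k) (g ⟨n - (j : ℕ), by omega⟩))

def phiAux (n : ℕ) (f : Fin n → H) (g : Fin (n+1) → H) :
    ((⨂[k] _ : Fin n, H) ⊗[k] Y) →ₗ[k] ((⨂[k] _ : Fin n, H) ⊗[k] Y) :=
  TensorProduct.map (PiTensorProduct.map (phiFam n f g))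
    (smulA (HopfAlgebra.antipode (R := k) (g 0)))

lemma phiFam_update_ne_zero (n : ℕ) (f : Fin n → H) (g : Fin (n+1) → H) (z : H) :
    phiFam (k := k) n f (Function.update g 0 z) = phiFam n f g := by
  funext j
  have hj := j.isLt
  have : (⟨n - (j : ℕ), by omega⟩ : Fin (n+1)) ≠ 0 := by
    intro h
    have := congrArg Fin.val h
    simp at this
    omega
  simp [phiFam, Function.update_of_ne this]

lemma phiFam_update (n : ℕ) (f : Fin n → H) (g : Fin (n+1) → H) (i : Fin (n+1))
    (hi : i ≠ 0) (j₀ : Fin n) (hj₀ : (j₀ : ℕ) = n - (i : ℕ)) (z : H) :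
    phiFam (k := k) n f (Function.update g i z) =
      Function.update (phiFam (k := k) n f g) j₀
        (LinearMap.mulRight k (f j₀) ∘ₗ
          LinearMap.mulLeft k (HopfAlgebra.antipode (R := k) z)) := by
  have hi1 : 1 ≤ (i : ℕ) := Nat.one_le_iff_ne_zero.mpr (fun h => hi (Fin.ext h))
  have hin : (i : ℕ) ≤ n := Nat.lt_succ_iff.mp i.isLt
  funext j
  by_cases hj : j = j₀
  · subst hj
    rw [Function.update_self]
    simp only [phiFam]
    have hidx : (⟨n - (j : ℕ), by omega⟩ : Fin (n+1)) = i := by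
      apply Fin.ext
      simp only [hj₀]
      omega
    rw [hidx, Function.update_self]
  · rw [Function.update_of_ne hj]
    simp only [phiFam]
    have : (⟨n - (j : ℕ), by omega⟩ : Fin (n+1)) ≠ i := by
      intro h
      apply hj
      have hv := congrArg Fin.val h
      simp only [Fin.val_mk] at hv
      have hjlt := j.isLt
      apply Fin.ext
      omega
    rw [Function.update_of_ne this]

lemma phiAux_update_add (n : ℕ) (f : Fin n → H) (g : Fin (n+1) → H) (i : Fin (n+1))
    (x y : H) :
    phiAux (k := k) (Y := Y) n f (Function.update g i (x + y)) =
      phiAux n f (Function.update g i x) + phiAux n f (Function.update g i y) := by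
  by_cases hi : i = 0
  · subst hi
    unfold phiAux
    rw [phiFam_update_ne_zero, phiFam_update_ne_zero, phiFam_update_ne_zero,
      Function.update_self, Function.update_self, Function.update_self,
      map_add, smulA_add, TensorProduct.map_add_right]
  · unfold phiAux
    have h1 : 0 < (i : ℕ) := Fin.pos_iff_ne_zero.mpr hi
    have h2 := i.isLt
    rw [phiFam_update n f g i hi ⟨n - (i : ℕ), by omega⟩ rfl,
      phiFam_update n f g i hi ⟨n - (i : ℕ), by omega⟩ rfl,
      phiFam_update n f g i hi ⟨n - (i : ℕ), by omega⟩ rfl,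
      Function.update_of_ne (Ne.symm hi), Function.update_of_ne (Ne.symm hi),
      Function.update_of_ne (Ne.symm hi)]
    rw [map_add, ← TensorProduct.map_add_left]
    congr 1
    have : LinearMap.mulLeft k (HopfAlgebra.antipode (R := k) x
        + HopfAlgebra.antipode (R := k) y) =
        LinearMap.mulLeft k (HopfAlgebra.antipode (R := k) x)
          + LinearMap.mulLeft k (HopfAlgebra.antipode (R := k) y) := by
      ext z; simp [add_mul]
    rw [this, LinearMap.comp_add, piMap_update_add]

lemma phiAux_update_smul (n : ℕ) (f : Fin n → H) (g : Fin (n+1) → H) (i : Fin (n+1))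
    (r : k) (x : H) :
    phiAux (k := k) (Y := Y) n f (Function.update g i (r • x)) =
      r • phiAux n f (Function.update g i x) := by
  by_cases hi : i = 0
  · subst hi
    unfold phiAux
    rw [phiFam_update_ne_zero, phiFam_update_ne_zero,
      Function.update_self, Function.update_self,
      map_smul, smulA_smul, TensorProduct.map_smul_right]
  · unfold phiAux
    have h1 : 0 < (i : ℕ) := Fin.pos_iff_ne_zero.mpr hi
    have h2 := i.isLt
    rw [phiFam_update n f g i hi ⟨n - (i : ℕ), by omega⟩ rfl,
      phiFam_update n f g i hi ⟨n - (i : ℕ), by omega⟩ rfl,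
      Function.update_of_ne (Ne.symm hi), Function.update_of_ne (Ne.symm hi)]
    rw [map_smul, ← TensorProduct.map_smul_left]
    congr 1
    have : LinearMap.mulLeft k (r • HopfAlgebra.antipode (R := k) x) =
        r • LinearMap.mulLeft k (HopfAlgebra.antipode (R := k) x) := by
      ext z; simp [smul_mul_assoc]
    rw [this, LinearMap.comp_smul, piMap_update_smul]

/-- `Phi` as a multilinear map in the first `n+1` tensor legs. -/
def phiM (n : ℕ) (f : Fin n → H) : MultilinearMap k (fun _ : Fin (n+1) => H)
    (((⨂[k] _ : Fin n, H) ⊗[k] Y) →ₗ[k] ((⨂[k] _ : Fin n, H) ⊗[k] Y)) where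
  toFun := phiAux n f
  map_update_add' := @fun dec g i x y => by
    rw [Subsingleton.elim dec (by clear dec; infer_instance)]
    exact phiAux_update_add n f g i x y
  map_update_smul' := @fun dec g i r x => by
    rw [Subsingleton.elim dec (by clear dec; infer_instance)]
    exact phiAux_update_smul n f g i r x

def Phi (n : ℕ) (f : Fin n → H) :
    (⨂[k] _ : Fin (n+1), H) ⊗[k] ((⨂[k] _ : Fin n, H) ⊗[k] Y) →ₗ[k]
      ((⨂[k] _ : Fin n, H) ⊗[k] Y) :=
  TensorProduct.lift (PiTensorProduct.lift (phiM n f))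

lemma Phi_tmul (n : ℕ) (f : Fin n → H) (g : Fin (n+1) → H)
    (t : (⨂[k] _ : Fin n, H) ⊗[k] Y) :
    Phi (Y := Y) n f (PiTensorProduct.tprod k g ⊗ₜ[k] t) = phiAux n f g t := by
  simp [Phi, phiM]

lemma Phi_apply (n : ℕ) (f : Fin n → H) (g : Fin (n+1) → H) (c : Fin n → H) (d : Y) :
    Phi n f (PiTensorProduct.tprod k g ⊗ₜ[k] (PiTensorProduct.tprod k c ⊗ₜ[k] d)) =
      PiTensorProduct.tprod k (fun j : Fin n =>
          HopfAlgebra.antipode (R := k) (g ⟨n - (j : ℕ), by omega⟩) * c j * f j)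
        ⊗ₜ[k] (HopfAlgebra.antipode (R := k) (g 0) • d) := by
  rw [Phi_tmul]
  simp [phiAux, phiFam]

end Phi

section structural

variable {H : Type*} [Ring H] [HopfAlgebra k H]

lemma tprod_fin_zero_eq {M : Type*} [AddCommGroup M] [Module k M] (f g : Fin 0 → M) :
    PiTensorProduct.tprod k f = PiTensorProduct.tprod k g := by
  congr
  funext x
  exact x.elim0

lemma itComul_zero_apply (x : H) : itComul k H 0 x = PiTensorProduct.tprod k (fun _ : Fin 1 => x) := by
  simp [itComul]

lemma itComul_succ_def (n : ℕ) : itComul k H (n+1) = consT k H (n+1) ∘ₗ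
    TensorProduct.map LinearMap.id (itComul k H n) ∘ₗ Coalgebra.comul := rfl

lemma consT_snocT (m : ℕ) (p : H) (t : ⨂[k] (_ : Fin m), H) (b : H) :
    consT k H (m+1) (p ⊗ₜ[k] snocT k m (t ⊗ₜ[k] b)) =
      snocT k (m+1) (consT k H m (p ⊗ₜ[k] t) ⊗ₜ[k] b) := by
  induction t using PiTensorProduct.induction_on with
  | smul_tprod r f =>
    simp only [← smul_tmul', tmul_smul, map_smul, snocT_tprod, consT_tprod,
      Fin.cons_snoc_eq_snoc_cons]
  | add x y hx hy =>
    simp only [add_tmul, tmul_add, map_add, hx, hy]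

lemma map_map_id {M N P Q : Type*} [AddCommGroup M] [Module k M] [AddCommGroup N] [Module k N]
    [AddCommGroup P] [Module k P] [AddCommGroup Q] [Module k Q]
    (F : N →ₗ[k] P) (G : M →ₗ[k] N) (w : M ⊗[k] Q) :
    TensorProduct.map F LinearMap.id (TensorProduct.map G LinearMap.id w) =
      TensorProduct.map (F ∘ₗ G) LinearMap.id w := by
  rw [← LinearMap.comp_apply, ← TensorProduct.map_comp, LinearMap.id_comp]

lemma itComul_succ_eq (n : ℕ) (x : H) :
    itComul k H (n+1) x =
      snocT k (n+1)
        ((TensorProduct.map (itComul k H n) LinearMap.id) (Coalgebra.comul x)) := by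
  induction n generalizing x with
  | zero =>
    obtain ⟨m, a, b, h⟩ := exists_sum_tmul (Coalgebra.comul (R := k) x)
    rw [itComul_succ_def, LinearMap.comp_apply, LinearMap.comp_apply, h, map_sum, map_sum,
      map_sum, map_sum]
    refine Finset.sum_congr rfl fun i _ => ?_
    rw [TensorProduct.map_tmul, TensorProduct.map_tmul]
    simp only [LinearMap.id_coe, id_eq, itComul_zero_apply, consT_tprod, snocT_tprod]
    congr 1
    funext j
    fin_cases j <;> rfl
  | succ n ih =>
    obtain ⟨m, a, b, h⟩ := exists_sum_tmul (Coalgebra.comul (R := k) x)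
    have claim1 : ∀ (p : H) (u : H ⊗[k] H),
        consT k H (n+2) (p ⊗ₜ[k]
            snocT k (n+1) ((TensorProduct.map (itComul k H n) LinearMap.id) u)) =
          snocT k (n+2) ((TensorProduct.map
              (consT k H (n+1) ∘ₗ TensorProduct.map LinearMap.id (itComul k H n))
              LinearMap.id)
            ((TensorProduct.assoc k H H H).symm (p ⊗ₜ[k] u))) := by
      intro p u
      induction u using TensorProduct.induction_on with
      | zero =>
        simp only [LinearMap.map_zero, tmul_zero, LinearEquiv.map_zero]
      | tmul a' b' =>
        rw [TensorProduct.map_tmul, TensorProduct.assoc_symm_tmul, TensorProduct.map_tmul,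
          LinearMap.comp_apply, TensorProduct.map_tmul]
        simp only [LinearMap.id_coe, id_eq]
        exact consT_snocT (n+1) p (itComul k H n a') b'
      | add u v hu hv =>
        rw [map_add, map_add, tmul_add, map_add, hu, hv, tmul_add, map_add, map_add, map_add]
    calc itComul k H (n+2) x
        = consT k H (n+2)
            ((TensorProduct.map LinearMap.id (itComul k H (n+1))) (Coalgebra.comul x)) := rfl
      _ = ∑ i, consT k H (n+2) (a i ⊗ₜ[k] itComul k H (n+1) (b i)) := by
          rw [h, map_sum, map_sum]
          exact Finset.sum_congr rfl fun i _ => by rw [TensorProduct.map_tmul]; rfl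
      _ = ∑ i, consT k H (n+2) (a i ⊗ₜ[k]
            snocT k (n+1)
              ((TensorProduct.map (itComul k H n) LinearMap.id) (Coalgebra.comul (b i)))) := by
          exact Finset.sum_congr rfl fun i _ => by rw [ih]
      _ = ∑ i, snocT k (n+2) ((TensorProduct.map
              (consT k H (n+1) ∘ₗ TensorProduct.map LinearMap.id (itComul k H n))
              LinearMap.id)
            ((TensorProduct.assoc k H H H).symm (a i ⊗ₜ[k] Coalgebra.comul (b i)))) := by
          exact Finset.sum_congr rfl fun i _ => claim1 (a i) (Coalgebra.comul (b i))
      _ = snocT k (n+2) ((TensorProduct.map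
              (consT k H (n+1) ∘ₗ TensorProduct.map LinearMap.id (itComul k H n))
              LinearMap.id)
            ((TensorProduct.assoc k H H H).symm
              ((LinearMap.lTensor H Coalgebra.comul) (Coalgebra.comul x)))) := by
          rw [h]
          rw [map_sum, map_sum, map_sum, map_sum]
          exact Finset.sum_congr rfl fun i _ => by rw [LinearMap.lTensor_tmul]
      _ = snocT k (n+2) ((TensorProduct.map
              (consT k H (n+1) ∘ₗ TensorProduct.map LinearMap.id (itComul k H n))
              LinearMap.id)
            ((LinearMap.rTensor H Coalgebra.comul) (Coalgebra.comul x))) := by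
          rw [Coalgebra.coassoc_symm_apply]
      _ = snocT k (n+2) ((TensorProduct.map (itComul k H (n+1)) LinearMap.id)
            (Coalgebra.comul x)) := by
          have : (LinearMap.rTensor H (Coalgebra.comul (R := k) (A := H)))
              (Coalgebra.comul x) =
              (TensorProduct.map Coalgebra.comul LinearMap.id) (Coalgebra.comul x) := rfl
          rw [this, map_map_id]
          rfl

variable {Y : Type*} [AddCommGroup Y] [Module k Y] (ρ : Y →ₗ[k] H ⊗[k] Y)

lemma itCoact_zero_apply (y : Y) :
    itCoact k H Y ρ 0 y = PiTensorProduct.tprod k (fun i : Fin 0 => i.elim0) ⊗ₜ[k] y := by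
  simp only [itCoact, LinearMap.comp_apply, LinearEquiv.coe_coe, TensorProduct.lid_symm_apply,
    TensorProduct.map_tmul, PiTensorProduct.isEmptyEquiv_symm_apply, one_smul,
    LinearMap.id_coe, id_eq]
  exact congrArg (· ⊗ₜ[k] y) (tprod_fin_zero_eq _ _)

lemma itCoact_succ_def (n : ℕ) : itCoact k H Y ρ (n+1) =
    TensorProduct.map (consT k H n) LinearMap.id ∘ₗ
      (TensorProduct.assoc k H (⨂[k] (_ : Fin n), H) Y).symm.toLinearMap ∘ₗ
      TensorProduct.map LinearMap.id (itCoact k H Y ρ n) ∘ₗ ρ := rfl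

end structural


section key

variable {H : Type*} [Ring H] [HopfAlgebra k H] {Y : Type*} [AddCommGroup Y] [Module k Y]
  [Module H Y] [IsScalarTower k H Y]

lemma snoc_apply_zero {n : ℕ} (g : Fin (n+1) → H) (q : H) :
    (Fin.snoc g q : Fin (n+2) → H) 0 = g 0 := by
  have h : ((0 : Fin (n+2))) = Fin.castSucc (0 : Fin (n+1)) := rfl
  rw [h, Fin.snoc_castSucc]

lemma tuple_eq (n : ℕ) (f : Fin (n+1) → H) (g : Fin (n+1) → H) (q u : H) (e : Fin n → H) :
    (fun J : Fin (n+1) => HopfAlgebra.antipode (R := k)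
        ((Fin.snoc g q : Fin (n+2) → H) ⟨n + 1 - (J : ℕ), by omega⟩)
      * (Fin.cons u e : Fin (n+1) → H) J * f J)
    = Fin.cons (HopfAlgebra.antipode (R := k) q * u * f 0)
        (fun j : Fin n => HopfAlgebra.antipode (R := k) (g ⟨n - (j : ℕ), by omega⟩)
          * e j * Fin.tail f j) := by
  funext J
  refine Fin.cases ?_ (fun j => ?_) J
  · have h1 : (⟨n + 1 - (((0 : Fin (n+1))) : ℕ), by omega⟩ : Fin (n+2)) = Fin.last (n+1) := by
      apply Fin.ext; simp
    rw [h1, Fin.snoc_last, Fin.cons_zero, Fin.cons_zero]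
  · have h1 : (⟨n + 1 - ((j.succ : Fin (n+1)) : ℕ), by omega⟩ : Fin (n+2)) =
        Fin.castSucc ⟨n - (j : ℕ), by omega⟩ := by
      apply Fin.ext
      simp only [Fin.val_succ, Fin.castSucc_mk]
      omega
    rw [h1, Fin.snoc_castSucc, Fin.cons_succ, Fin.cons_succ]
    rfl

/-- prepend a fixed `H`-factor. -/
def CAM (n : ℕ) : H ⊗[k] ((⨂[k] (_ : Fin n), H) ⊗[k] Y) →ₗ[k]
    (⨂[k] (_ : Fin (n+1)), H) ⊗[k] Y :=
  TensorProduct.map (consT k H n) LinearMap.id ∘ₗ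
    (TensorProduct.assoc k H (⨂[k] (_ : Fin n), H) Y).symm.toLinearMap

lemma CAM_tmul (n : ℕ) (x : H) (e : Fin n → H) (w : Y) :
    CAM n (x ⊗ₜ[k] (PiTensorProduct.tprod k e ⊗ₜ[k] w)) = PiTensorProduct.tprod k (Fin.cons x e) ⊗ₜ[k] w := by
  simp only [CAM, LinearMap.comp_apply, LinearEquiv.coe_coe, TensorProduct.assoc_symm_tmul,
    TensorProduct.map_tmul, consT_tprod, LinearMap.id_coe, id_eq]

/-- the auxiliary comparison map. -/
def Tmap (n : ℕ) (f : Fin (n+1) → H) (ρ : Y →ₗ[k] H ⊗[k] Y) :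
    (H ⊗[k] H) ⊗[k] (H ⊗[k] Y) →ₗ[k] (⨂[k] (_ : Fin (n+1)), H) ⊗[k] Y :=
  CAM n ∘ₗ
    TensorProduct.map
      (LinearMap.mulRight k (f 0) ∘ₗ LinearMap.mul' k H ∘ₗ
        LinearMap.rTensor H (HopfAlgebra.antipode (R := k)))
      (Phi n (Fin.tail f) ∘ₗ TensorProduct.map (itComul k H n) (itCoact k H Y ρ n)) ∘ₗ
    (tensorTensorTensorComm k H H H Y).toLinearMap ∘ₗ
    TensorProduct.map (TensorProduct.comm k H H).toLinearMap LinearMap.id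

lemma Tmap_tmul (n : ℕ) (f : Fin (n+1) → H) (ρ : Y →ₗ[k] H ⊗[k] Y)
    (p q u : H) (v : Y) :
    Tmap n f ρ ((p ⊗ₜ[k] q) ⊗ₜ[k] (u ⊗ₜ[k] v)) =
      CAM n ((HopfAlgebra.antipode (R := k) q * u * f 0) ⊗ₜ[k]
        Phi n (Fin.tail f) (itComul k H n p ⊗ₜ[k] itCoact k H Y ρ n v)) := by
  simp only [Tmap, LinearMap.comp_apply, LinearEquiv.coe_coe, TensorProduct.map_tmul,
    TensorProduct.comm_tmul, LinearMap.id_coe, id_eq,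
    TensorProduct.tensorTensorTensorComm_tmul, LinearMap.rTensor_tmul,
    LinearMap.mul'_apply, LinearMap.mulRight_apply]

lemma lequiv_map_sum {A B : Type*} [AddCommGroup A] [Module k A] [AddCommGroup B]
    [Module k B] (e : A ≃ₗ[k] B) {ι : Type*} (s : Finset ι) (g : ι → A) :
    e (∑ i ∈ s, g i) = ∑ i ∈ s, e (g i) := by
  rw [← LinearEquiv.coe_coe, map_sum]

lemma claimC (n : ℕ) (f : Fin (n+1) → H)
    (q u : H) (t : ⨂[k] (_ : Fin (n+1)), H) (sw : (⨂[k] (_ : Fin n), H) ⊗[k] Y) :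
    Phi (n+1) f (snocT k (n+1) (t ⊗ₜ[k] q) ⊗ₜ[k]
        (TensorProduct.map (consT k H n) LinearMap.id
          ((TensorProduct.assoc k H (⨂[k] (_ : Fin n), H) Y).symm (u ⊗ₜ[k] sw)))) =
      CAM n ((HopfAlgebra.antipode (R := k) q * u * f 0) ⊗ₜ[k]
        Phi n (Fin.tail f) (t ⊗ₜ[k] sw)) := by
  obtain ⟨Mt, g, ht⟩ := exists_sum_tprod t
  obtain ⟨Ms, e, w, hsw⟩ := exists_sum_tprod_tmul sw
  rw [ht, hsw]
  simp only [TensorProduct.sum_tmul, TensorProduct.tmul_sum, map_sum, lequiv_map_sum]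
  refine Finset.sum_congr rfl fun j _ => Finset.sum_congr rfl fun i _ => ?_
  rw [snocT_tprod, TensorProduct.assoc_symm_tmul, TensorProduct.map_tmul, consT_tprod,
    Phi_apply, Phi_apply, CAM_tmul]
  simp only [LinearMap.id_coe, id_eq]
  rw [tuple_eq n f (g i) q u (e j), snoc_apply_zero]

lemma claimB (n : ℕ) (f : Fin (n+1) → H) (ρ : Y →ₗ[k] H ⊗[k] Y) (x : H) (z : Y) :
    Phi (n+1) f (itComul k H (n+1) x ⊗ₜ[k] itCoact k H Y ρ (n+1) z) =
      Tmap n f ρ (Coalgebra.comul x ⊗ₜ[k] ρ z) := by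
  obtain ⟨I, p, q, hx⟩ := exists_sum_tmul (Coalgebra.comul (R := k) x)
  obtain ⟨J, u, v, hz⟩ := exists_sum_tmul (ρ z)
  have e1 : itComul k H (n+1) x = ∑ i, snocT k (n+1) (itComul k H n (p i) ⊗ₜ[k] q i) := by
    rw [itComul_succ_eq, hx, map_sum, map_sum]
    exact Finset.sum_congr rfl fun i _ => by rw [TensorProduct.map_tmul]; rfl
  have e2 : itCoact k H Y ρ (n+1) z = ∑ j, TensorProduct.map (consT k H n) LinearMap.id
      ((TensorProduct.assoc k H (⨂[k] (_ : Fin n), H) Y).symm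
        (u j ⊗ₜ[k] itCoact k H Y ρ n (v j))) := by
    rw [itCoact_succ_def]
    simp only [LinearMap.comp_apply, LinearEquiv.coe_coe, hz, map_sum, lequiv_map_sum,
      TensorProduct.map_tmul, LinearMap.id_coe, id_eq]
  rw [e1, e2, TensorProduct.sum_tmul, map_sum, hx, hz, TensorProduct.sum_tmul, map_sum]
  refine Finset.sum_congr rfl fun i _ => ?_
  rw [TensorProduct.tmul_sum, map_sum, TensorProduct.tmul_sum, map_sum]
  refine Finset.sum_congr rfl fun j _ => ?_
  rw [claimC, Tmap_tmul]

lemma claimD (n : ℕ) (f : Fin (n+1) → H) (ρ : Y →ₗ[k] H ⊗[k] Y) (x : H) (z : Y) :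
    Tmap n f ρ ((LinearMap.rTensor (H ⊗[k] Y) Coalgebra.comul)
        ((TensorProduct.assoc k H H Y) (Coalgebra.comul x ⊗ₜ[k] z))) =
      CAM n ((f 0) ⊗ₜ[k]
        Phi n (Fin.tail f) (itComul k H n x ⊗ₜ[k] itCoact k H Y ρ n z)) := by
  obtain ⟨I, p, q, hx⟩ := exists_sum_tmul (Coalgebra.comul (R := k) x)
  -- the element in question
  have e1 : (LinearMap.rTensor (H ⊗[k] Y) (Coalgebra.comul (R := k)))
      ((TensorProduct.assoc k H H Y) (Coalgebra.comul x ⊗ₜ[k] z)) =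
      (LinearMap.lTensor (H ⊗[k] H) ((TensorProduct.mk k H Y).flip z))
        ((LinearMap.rTensor H (Coalgebra.comul (R := k)))
          (Coalgebra.comul x)) := by
    rw [hx, TensorProduct.sum_tmul, map_sum, map_sum, map_sum, map_sum]
    refine Finset.sum_congr rfl fun i _ => ?_
    rw [TensorProduct.assoc_tmul, LinearMap.rTensor_tmul, LinearMap.rTensor_tmul,
      LinearMap.lTensor_tmul]
    rfl
  rw [e1, ← Coalgebra.coassoc_symm_apply, hx]
  rw [map_sum, map_sum, map_sum, map_sum]
  have e2 : ∀ i, (Tmap n f ρ) ((LinearMap.lTensor (H ⊗[k] H) ((TensorProduct.mk k H Y).flip z))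
      ((TensorProduct.assoc k H H H).symm
        ((LinearMap.lTensor H Coalgebra.comul) (p i ⊗ₜ[k] q i)))) =
      Coalgebra.counit (R := k) (q i) •
        CAM n ((f 0) ⊗ₜ[k]
          Phi n (Fin.tail f) (itComul k H n (p i) ⊗ₜ[k] itCoact k H Y ρ n z)) := by
    intro i
    obtain ⟨M, al, be, hq⟩ := exists_sum_tmul (Coalgebra.comul (R := k) (q i))
    rw [LinearMap.lTensor_tmul, hq, TensorProduct.tmul_sum, map_sum, map_sum, map_sum]
    have e3 : ∀ m, (Tmap n f ρ) ((LinearMap.lTensor (H ⊗[k] H) ((TensorProduct.mk k H Y).flip z))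
        ((TensorProduct.assoc k H H H).symm (p i ⊗ₜ[k] (al m ⊗ₜ[k] be m)))) =
        CAM n ((HopfAlgebra.antipode (R := k) (al m) * be m * f 0) ⊗ₜ[k]
          Phi n (Fin.tail f) (itComul k H n (p i) ⊗ₜ[k] itCoact k H Y ρ n z)) := by
      intro m
      rw [TensorProduct.assoc_symm_tmul, LinearMap.lTensor_tmul]
      exact Tmap_tmul n f ρ (p i) (al m) (be m) z
    rw [Finset.sum_congr rfl fun m _ => e3 m]
    have e4 : ∑ m, HopfAlgebra.antipode (R := k) (al m) * be m =
        algebraMap k H (Coalgebra.counit (R := k) (q i)) := by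
      have h5 := HopfAlgebra.mul_antipode_rTensor_comul_apply (R := k) (q i)
      rw [hq, map_sum, map_sum] at h5
      simp only [LinearMap.rTensor_tmul, LinearMap.mul'_apply] at h5
      rw [← h5]
    calc ∑ m, CAM n ((HopfAlgebra.antipode (R := k) (al m) * be m * f 0) ⊗ₜ[k]
            Phi n (Fin.tail f) (itComul k H n (p i) ⊗ₜ[k] itCoact k H Y ρ n z))
        = CAM n (((∑ m, HopfAlgebra.antipode (R := k) (al m) * be m) * f 0) ⊗ₜ[k]
            Phi n (Fin.tail f) (itComul k H n (p i) ⊗ₜ[k] itCoact k H Y ρ n z)) := by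
          rw [Finset.sum_mul, TensorProduct.sum_tmul, map_sum]
      _ = Coalgebra.counit (R := k) (q i) •
            CAM n ((f 0) ⊗ₜ[k]
              Phi n (Fin.tail f) (itComul k H n (p i) ⊗ₜ[k] itCoact k H Y ρ n z)) := by
          rw [e4, ← Algebra.smul_def, ← smul_tmul', LinearMap.map_smul]
  rw [Finset.sum_congr rfl fun i _ => e2 i]
  have e5 : ∑ i, Coalgebra.counit (R := k) (q i) • p i = x := by
    have h6 := Coalgebra.lTensor_counit_comul (R := k) x
    rw [hx, map_sum] at h6
    simp only [LinearMap.lTensor_tmul] at h6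
    have h7 := congrArg (TensorProduct.rid k H) h6
    rw [map_sum] at h7
    simp only [TensorProduct.rid_tmul, one_smul] at h7
    exact h7
  have e6 : ∀ i, Coalgebra.counit (R := k) (q i) •
      CAM n ((f 0) ⊗ₜ[k] Phi n (Fin.tail f)
        (itComul k H n (p i) ⊗ₜ[k] itCoact k H Y ρ n z)) =
      CAM n ((f 0) ⊗ₜ[k] Phi n (Fin.tail f)
        ((Coalgebra.counit (R := k) (q i) • itComul k H n (p i)) ⊗ₜ[k]
          itCoact k H Y ρ n z)) := by
    intro i
    simp only [← smul_tmul', tmul_smul, LinearMap.map_smul]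
  rw [Finset.sum_congr rfl fun i _ => e6 i]
  have e7 : ∑ i, CAM n ((f 0) ⊗ₜ[k] Phi n (Fin.tail f)
      ((Coalgebra.counit (R := k) (q i) • itComul k H n (p i)) ⊗ₜ[k]
        itCoact k H Y ρ n z)) =
      CAM n ((f 0) ⊗ₜ[k] Phi n (Fin.tail f)
        ((∑ i, Coalgebra.counit (R := k) (q i) • itComul k H n (p i)) ⊗ₜ[k]
          itCoact k H Y ρ n z)) := by
    rw [TensorProduct.sum_tmul, map_sum, TensorProduct.tmul_sum, map_sum]
  rw [e7]
  have e8 : (∑ i, Coalgebra.counit (R := k) (q i) • itComul k H n (p i)) =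
      itComul k H n x := by
    rw [← e5, map_sum]
    exact Finset.sum_congr rfl fun i _ => (LinearMap.map_smul _ _ _).symm
  rw [e8]

theorem key (ρ : Y →ₗ[k] H ⊗[k] Y)
    (hρ_coassoc :
      (TensorProduct.assoc k H H Y).toLinearMap ∘ₗ
        TensorProduct.map Coalgebra.comul LinearMap.id ∘ₗ ρ =
      TensorProduct.map LinearMap.id ρ ∘ₗ ρ)
    (hstab₁ : ∀ (y : Y) (m : ℕ) (a : Fin m → H) (b : Fin m → Y),
      ρ y = ∑ i, a i ⊗ₜ[k] b i →
      ∑ i, HopfAlgebra.antipode (R := k) (a i) • b i = y) :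
    ∀ (n : ℕ) (f : Fin n → H) (y : Y),
      Phi n f (TensorProduct.map (itComul k H n) (itCoact k H Y ρ n) (ρ y)) =
        PiTensorProduct.tprod k f ⊗ₜ[k] y := by
  intro n
  induction n with
  | zero =>
    intro f y
    obtain ⟨m, a, b, hab⟩ := exists_sum_tmul (ρ y)
    rw [hab, map_sum, map_sum]
    have e1 : ∀ i, Phi 0 f (TensorProduct.map (itComul k H 0) (itCoact k H Y ρ 0)
        (a i ⊗ₜ[k] b i)) =
        PiTensorProduct.tprod k f ⊗ₜ[k] (HopfAlgebra.antipode (R := k) (a i) • b i) := by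
      intro i
      rw [TensorProduct.map_tmul, itComul_zero_apply, itCoact_zero_apply, Phi_apply]
      exact congrArg₂ (· ⊗ₜ[k] ·) (tprod_fin_zero_eq _ _) rfl
    rw [Finset.sum_congr rfl fun i _ => e1 i, ← TensorProduct.tmul_sum,
      hstab₁ y m a b hab]
  | succ n ih =>
    intro f y
    obtain ⟨L, c, d, hcd⟩ := exists_sum_tmul (ρ y)
    have hco := LinearMap.congr_fun hρ_coassoc y
    simp only [LinearMap.comp_apply, LinearEquiv.coe_coe] at hco
    calc Phi (n+1) f (TensorProduct.map (itComul k H (n+1)) (itCoact k H Y ρ (n+1)) (ρ y))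
        = ∑ l, Phi (n+1) f (itComul k H (n+1) (c l) ⊗ₜ[k] itCoact k H Y ρ (n+1) (d l)) := by
          rw [hcd, map_sum, map_sum]
          exact Finset.sum_congr rfl fun l _ => by rw [TensorProduct.map_tmul]
      _ = ∑ l, Tmap n f ρ (Coalgebra.comul (c l) ⊗ₜ[k] ρ (d l)) := by
          exact Finset.sum_congr rfl fun l _ => claimB n f ρ (c l) (d l)
      _ = Tmap n f ρ ((LinearMap.rTensor (H ⊗[k] Y) Coalgebra.comul)
            ((TensorProduct.map LinearMap.id ρ) (ρ y))) := by
          rw [hcd, map_sum, map_sum, map_sum]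
          exact Finset.sum_congr rfl fun l _ => by
            rw [TensorProduct.map_tmul, LinearMap.rTensor_tmul]; rfl
      _ = Tmap n f ρ ((LinearMap.rTensor (H ⊗[k] Y) Coalgebra.comul)
            ((TensorProduct.assoc k H H Y)
              ((TensorProduct.map Coalgebra.comul LinearMap.id) (ρ y)))) := by
          rw [← hco]
      _ = ∑ l, Tmap n f ρ ((LinearMap.rTensor (H ⊗[k] Y) Coalgebra.comul)
            ((TensorProduct.assoc k H H Y) (Coalgebra.comul (c l) ⊗ₜ[k] d l))) := by
          rw [hcd, map_sum, map_sum, map_sum, map_sum]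
          exact Finset.sum_congr rfl fun l _ => by rw [TensorProduct.map_tmul]; rfl
      _ = ∑ l, CAM n ((f 0) ⊗ₜ[k] Phi n (Fin.tail f)
            (itComul k H n (c l) ⊗ₜ[k] itCoact k H Y ρ n (d l))) := by
          exact Finset.sum_congr rfl fun l _ => claimD n f ρ (c l) (d l)
      _ = CAM n ((f 0) ⊗ₜ[k] Phi n (Fin.tail f)
            (TensorProduct.map (itComul k H n) (itCoact k H Y ρ n) (ρ y))) := by
          rw [hcd, map_sum]
          have : ∀ l, TensorProduct.map (itComul k H n) (itCoact k H Y ρ n)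
              (c l ⊗ₜ[k] d l) = itComul k H n (c l) ⊗ₜ[k] itCoact k H Y ρ n (d l) :=
            fun l => TensorProduct.map_tmul _ _ _ _
          rw [Finset.sum_congr rfl fun l _ => this l, map_sum, TensorProduct.tmul_sum,
            map_sum]
      _ = CAM n ((f 0) ⊗ₜ[k] (PiTensorProduct.tprod k (Fin.tail f) ⊗ₜ[k] y)) := by
          rw [ih (Fin.tail f) y]
      _ = PiTensorProduct.tprod k f ⊗ₜ[k] y := by
          rw [CAM_tmul, Fin.cons_self_tail]

end key

end Stmt7

/-- if `Y` is `1`-stable then `p_n ∘ i_n = id`, so each `p_n` is surjective. -/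
theorem statement7
    {H : Type*} [Ring H] [HopfAlgebra k H]
    (Sinv : H →ₗ[k] H)
    (hSinv₁ : ∀ h : H, Sinv (HopfAlgebra.antipode (R := k) h) = h)
    (hSinv₂ : ∀ h : H, HopfAlgebra.antipode (R := k) (Sinv h) = h)
    {Y : Type*} [AddCommGroup Y] [Module k Y] [Module H Y] [IsScalarTower k H Y]
    (ρ : Y →ₗ[k] H ⊗[k] Y)
    (hρ_coassoc :
      (TensorProduct.assoc k H H Y).toLinearMap ∘ₗ
        TensorProduct.map Coalgebra.comul LinearMap.id ∘ₗ ρ =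
      TensorProduct.map LinearMap.id ρ ∘ₗ ρ)
    (hρ_counit :
      (TensorProduct.lid k Y).toLinearMap ∘ₗ
        TensorProduct.map Coalgebra.counit LinearMap.id ∘ₗ ρ = LinearMap.id)
    (hstab₁ : ∀ (y : Y) (m : ℕ) (a : Fin m → H) (b : Fin m → Y),
      ρ y = ∑ i, a i ⊗ₜ[k] b i →
      ∑ i, HopfAlgebra.antipode (R := k) (a i) • b i = y)
    (p : (n : ℕ) →
      (PiTensorProduct k fun _ : Fin (n+1) => H) ⊗[k] Y →ₗ[k]
      (PiTensorProduct k fun _ : Fin n => H) ⊗[k] Y)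
    (hp0 : ∀ (h : H) (y : Y),
      p 0 (PiTensorProduct.tprod k (fun _ : Fin 1 => h) ⊗ₜ[k] y) =
        (PiTensorProduct.isEmptyEquiv (Fin 0)).symm 1 ⊗ₜ[k]
          (HopfAlgebra.antipode (R := k) h • y))
    (hp : ∀ (n : ℕ) (f : Fin (n+2) → H) (y : Y)
      (m : ℕ) (g : Fin m → Fin (n+2) → H)
      (m' : ℕ) (c : Fin m' → Fin (n+1) → H) (d : Fin m' → Y),
      itComul k H (n+1) (f (Fin.last (n+1))) = ∑ i, PiTensorProduct.tprod k (g i) →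
      itCoact k H Y ρ (n+1) y = ∑ l, PiTensorProduct.tprod k (c l) ⊗ₜ[k] d l →
      p (n+1) (PiTensorProduct.tprod k f ⊗ₜ[k] y) =
        ∑ i, ∑ l, PiTensorProduct.tprod k
          (fun j : Fin (n+1) =>
            HopfAlgebra.antipode (R := k) (g i ⟨n + 1 - (j : ℕ), by omega⟩) *
              c l j * f j.castSucc) ⊗ₜ[k]
          (HopfAlgebra.antipode (R := k) (g i 0) • d l))
    (iT : (n : ℕ) →
      (PiTensorProduct k fun _ : Fin n => H) ⊗[k] Y →ₗ[k]
      (PiTensorProduct k fun _ : Fin (n+1) => H) ⊗[k] Y)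
    (hiT : ∀ (n : ℕ) (f : Fin n → H) (y : Y)
      (m' : ℕ) (c : Fin m' → H) (d : Fin m' → Y),
      ρ y = ∑ l, c l ⊗ₜ[k] d l →
      iT n (PiTensorProduct.tprod k f ⊗ₜ[k] y) =
        ∑ l, PiTensorProduct.tprod k (Fin.snoc f (c l)) ⊗ₜ[k] d l)
 :
    (∀ n : ℕ, p n ∘ₗ iT n = LinearMap.id) ∧
    (∀ n : ℕ, Function.Surjective (p n)) := by
  classical
  have main : ∀ (n : ℕ) (f : Fin n → H) (y : Y),
      p n (iT n (PiTensorProduct.tprod k f ⊗ₜ[k] y)) =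
        PiTensorProduct.tprod k f ⊗ₜ[k] y := by
    intro n
    match n with
    | 0 =>
      intro f y
      obtain ⟨m, c, d, hcd⟩ := Stmt7.exists_sum_tmul (ρ y)
      rw [hiT 0 f y m c d hcd, map_sum]
      have e1 : ∀ l, p 0 (PiTensorProduct.tprod k (Fin.snoc f (c l)) ⊗ₜ[k] d l) =
          (PiTensorProduct.isEmptyEquiv (Fin 0)).symm 1 ⊗ₜ[k]
            (HopfAlgebra.antipode (R := k) (c l) • d l) := by
        intro l
        have hsn : (Fin.snoc f (c l) : Fin 1 → H) = fun _ : Fin 1 => c l := by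
          funext j
          have hj : j = Fin.last 0 := Fin.ext (by omega)
          rw [hj, Fin.snoc_last]
        rw [hsn]
        exact hp0 (c l) (d l)
      rw [Finset.sum_congr rfl fun l _ => e1 l, ← TensorProduct.tmul_sum,
        hstab₁ y m c d hcd]
      congr 1
      rw [PiTensorProduct.isEmptyEquiv_symm_apply, one_smul]
      exact Stmt7.tprod_fin_zero_eq _ _
    | (n+1) =>
      intro f y
      obtain ⟨m, c, d, hcd⟩ := Stmt7.exists_sum_tmul (ρ y)
      rw [hiT (n+1) f y m c d hcd, map_sum]
      have e1 : ∀ l, p (n+1) (PiTensorProduct.tprod k (Fin.snoc f (c l)) ⊗ₜ[k] d l) =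
          Stmt7.Phi (n+1) f (TensorProduct.map (itComul k H (n+1)) (itCoact k H Y ρ (n+1))
            (c l ⊗ₜ[k] d l)) := by
        intro l
        obtain ⟨M, g, hg⟩ := Stmt7.exists_sum_tprod (itComul k H (n+1) (c l))
        obtain ⟨M', cc, dd, hccdd⟩ :=
          Stmt7.exists_sum_tprod_tmul (itCoact k H Y ρ (n+1) (d l))
        have hlast : itComul k H (n+1) ((Fin.snoc f (c l) : Fin (n+2) → H)
            (Fin.last (n+1))) = ∑ i, PiTensorProduct.tprod k (g i) := by
          rw [Fin.snoc_last]; exact hg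
        rw [hp n (Fin.snoc f (c l)) (d l) M g M' cc dd hlast hccdd]
        rw [TensorProduct.map_tmul, hg, hccdd, TensorProduct.sum_tmul, map_sum]
        refine Finset.sum_congr rfl fun i _ => ?_
        rw [TensorProduct.tmul_sum, map_sum]
        refine Finset.sum_congr rfl fun l' _ => ?_
        rw [Stmt7.Phi_apply]
        refine congrArg₂ (· ⊗ₜ[k] ·) ?_ rfl
        refine congrArg (PiTensorProduct.tprod k) (funext fun j => ?_)
        rw [Fin.snoc_castSucc]
      rw [Finset.sum_congr rfl fun l _ => e1 l, ← map_sum, ← map_sum, ← hcd]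
      exact Stmt7.key ρ hρ_coassoc hstab₁ (n+1) f y
  have hcomp : ∀ n : ℕ, p n ∘ₗ iT n = LinearMap.id := by
    intro n
    apply TensorProduct.ext'
    intro t y
    induction t using PiTensorProduct.induction_on with
    | smul_tprod r g =>
      simp only [LinearMap.comp_apply, LinearMap.id_coe, id_eq, ← smul_tmul',
        LinearMap.map_smul]
      rw [main n g y]
    | add t1 t2 h1 h2 =>
      simp only [LinearMap.comp_apply, LinearMap.id_coe, id_eq] at h1 h2 ⊢
      rw [add_tmul, map_add, map_add, h1, h2]
  exact ⟨hcomp, fun n x => ⟨iT n x, by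
    rw [← LinearMap.comp_apply, hcomp n, LinearMap.id_apply]⟩⟩
end
end

section
/- Let H be a Hopf algebra over a field k with bijective antipode S, and let X and Y be left H-modules. Give X ⊗ Y the diagonal left H-action h·(x ⊗ y) := h_(1)·x ⊗ h_(2)·y, and let X^R be X regarded as a right H-module via x·h := S^{-1}(h)·x. Then the map x ⊗ y ↦ x ⊗_H y induces a k-linear isomorphism _H(X ⊗ Y) ≅ X^R ⊗_H Y, where _H(X ⊗ Y) := (X ⊗ Y)/span{ε(h)ζ − h·ζ : h ∈ H, ζ ∈ X ⊗ Y}. -/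
open TensorProduct PiTensorProduct

noncomputable section

variable (k : Type*) [Field k]

open Coalgebra HopfAlgebra LinearMap

section Aux
variable {R : Type*} [Field R] {A : Type*} [Ring A] [HopfAlgebra R A]

def Coalgebra.Repr.mul' {a b : A} {ι κ : Type*} (ra : Coalgebra.Repr R a ι)
    (rb : Coalgebra.Repr R b κ) :
    Coalgebra.Repr R (a * b) (ι × κ) where
  index := ra.index ×ˢ rb.index
  left := fun p => ra.left p.1 * rb.left p.2
  right := fun p => ra.right p.1 * rb.right p.2
  eq := by
    rw [Bialgebra.comul_mul, ← ra.eq, ← rb.eq, Finset.sum_mul_sum, Finset.sum_product]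
    simp [Algebra.TensorProduct.tmul_mul_tmul]

lemma sum_counit_smul {a : A} {ι : Type*} (r : Coalgebra.Repr R a ι) :
    ∑ i ∈ r.index, Coalgebra.counit (R := R) (r.left i) • r.right i = a := by
  have h2 := congrArg (TensorProduct.lid R A) (Coalgebra.sum_counit_tmul_eq r)
  simp only [map_sum, lid_tmul, one_smul] at h2
  exact h2

lemma sum_smul_counit {a : A} {ι : Type*} (r : Coalgebra.Repr R a ι) :
    ∑ i ∈ r.index, Coalgebra.counit (R := R) (r.right i) • r.left i = a := by
  have h2 := congrArg (TensorProduct.rid R A) (Coalgebra.sum_tmul_counit_eq r)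
  simp only [map_sum, rid_tmul, one_smul] at h2
  exact h2

noncomputable def tri (c d : A) (g : A →ₗ[R] A) : A ⊗[R] (A ⊗[R] A) →ₗ[R] A :=
  LinearMap.mul' R A ∘ₗ
    TensorProduct.map (LinearMap.mulLeft R c ∘ₗ antipode (R := R))
      (LinearMap.mul' R A ∘ₗ TensorProduct.map LinearMap.id (LinearMap.mulLeft R d ∘ₗ g))

@[simp] lemma tri_apply (c d : A) (g : A →ₗ[R] A) (x y z : A) :
    tri c d g (x ⊗ₜ[R] (y ⊗ₜ[R] z)) = (c * antipode (R := R) x) * (y * (d * g z)) := by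
  simp [tri]

lemma renumber {M : Type*} [AddCommGroup M] [Module R M] {a : A} {ι : Type*}
    {κ Λ : ι → Type*} (r : Coalgebra.Repr R a ι)
    (r1 : (i : ι) → Coalgebra.Repr R (r.left i) (κ i))
    (r2 : (i : ι) → Coalgebra.Repr R (r.right i) (Λ i))
    (T : A ⊗[R] (A ⊗[R] A) →ₗ[R] M) :
    ∑ i ∈ r.index, ∑ p ∈ (r1 i).index,
        T ((r1 i).left p ⊗ₜ[R] ((r1 i).right p ⊗ₜ[R] r.right i)) =
      ∑ i ∈ r.index, ∑ p ∈ (r2 i).index,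
        T (r.left i ⊗ₜ[R] ((r2 i).left p ⊗ₜ[R] (r2 i).right p)) := by
  have h2 := congrArg T (Coalgebra.sum_tmul_tmul_eq r r1 r2)
  simpa only [map_sum] using h2

theorem antipode_mul_anti (a b : A) :
    antipode (R := R) (a * b) = antipode (R := R) b * antipode (R := R) a := by
  classical
  let ra := ℛ R a
  let rb := ℛ R b
  let ra1 : (i : A × A) → Coalgebra.Repr R (ra.left i) (A × A) := fun i => ℛ R _
  let ra2 : (i : A × A) → Coalgebra.Repr R (ra.right i) (A × A) := fun i => ℛ R _
  let rb1 : (j : A × A) → Coalgebra.Repr R (rb.left j) (A × A) := fun j => ℛ R _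
  let rb2 : (j : A × A) → Coalgebra.Repr R (rb.right j) (A × A) := fun j => ℛ R _
  set W : A := ∑ j ∈ rb.index, ∑ q ∈ (rb2 j).index, ∑ i ∈ ra.index, ∑ p ∈ (ra2 i).index,
      (antipode (R := R) (rb.left j) * antipode (R := R) (ra.left i)) *
        ((ra2 i).left p * ((rb2 j).left q *
          antipode (R := R) ((ra2 i).right p * (rb2 j).right q))) with hW
  have claim1 : W = antipode (R := R) b * antipode (R := R) a := by
    rw [hW]
    calc
      ∑ j ∈ rb.index, ∑ q ∈ (rb2 j).index, ∑ i ∈ ra.index, ∑ p ∈ (ra2 i).index,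
          (antipode (R := R) (rb.left j) * antipode (R := R) (ra.left i)) *
            ((ra2 i).left p * ((rb2 j).left q *
              antipode (R := R) ((ra2 i).right p * (rb2 j).right q)))
          = ∑ j ∈ rb.index, ∑ i ∈ ra.index,
              (Coalgebra.counit (R := R) (rb.right j) * Coalgebra.counit (R := R) (ra.right i)) •
                (antipode (R := R) (rb.left j) * antipode (R := R) (ra.left i)) := by
        refine Finset.sum_congr rfl fun j _ => ?_
        rw [Finset.sum_comm]
        refine Finset.sum_congr rfl fun i _ => ?_
        have key : ∑ p ∈ (ra2 i).index, ∑ q ∈ (rb2 j).index,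
            ((ra2 i).left p * ((rb2 j).left q *
              antipode (R := R) ((ra2 i).right p * (rb2 j).right q)))
            = (Coalgebra.counit (R := R) (rb.right j) * Coalgebra.counit (R := R) (ra.right i))
              • (1 : A) := by
          have h1 := sum_mul_antipode_eq_smul (R := R) ((ra2 i).mul' (rb2 j))
          simp only [Coalgebra.Repr.mul', Finset.sum_product] at h1
          rw [show (Coalgebra.counit (R := R) (rb.right j) *
              Coalgebra.counit (R := R) (ra.right i) : R)
              = Coalgebra.counit (R := R) (ra.right i * rb.right j) by
            rw [Bialgebra.counit_mul, mul_comm], ← h1]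
          exact Finset.sum_congr rfl fun p _ => Finset.sum_congr rfl fun q _ =>
            (mul_assoc _ _ _).symm
        rw [Finset.sum_comm]
        have pull : antipode (R := R) (rb.left j) * antipode (R := R) (ra.left i) *
            ∑ p ∈ (ra2 i).index, ∑ q ∈ (rb2 j).index,
              ((ra2 i).left p * ((rb2 j).left q *
                antipode (R := R) ((ra2 i).right p * (rb2 j).right q)))
            = ∑ p ∈ (ra2 i).index, ∑ q ∈ (rb2 j).index,
              (antipode (R := R) (rb.left j) * antipode (R := R) (ra.left i)) *
                ((ra2 i).left p * ((rb2 j).left q *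
                  antipode (R := R) ((ra2 i).right p * (rb2 j).right q))) := by
          simp only [Finset.mul_sum]
        rw [← pull, key, mul_smul_comm, mul_one]
      _ = antipode (R := R) b * antipode (R := R) a := by
        have ha : antipode (R := R) a =
            ∑ i ∈ ra.index, Coalgebra.counit (R := R) (ra.right i) • antipode (R := R) (ra.left i) := by
          conv_lhs => rw [← sum_smul_counit ra]
          simp [map_sum]
        have hb : antipode (R := R) b =
            ∑ j ∈ rb.index, Coalgebra.counit (R := R) (rb.right j) • antipode (R := R) (rb.left j) := by
          conv_lhs => rw [← sum_smul_counit rb]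
          simp [map_sum]
        rw [ha, hb, Finset.sum_mul_sum]
        exact Finset.sum_congr rfl fun j _ => Finset.sum_congr rfl fun i _ =>
          (smul_mul_smul_comm _ _ _ _).symm
  have claim2 : W = antipode (R := R) (a * b) := by
    rw [hW]
    calc
      ∑ j ∈ rb.index, ∑ q ∈ (rb2 j).index, ∑ i ∈ ra.index, ∑ p ∈ (ra2 i).index,
          (antipode (R := R) (rb.left j) * antipode (R := R) (ra.left i)) *
            ((ra2 i).left p * ((rb2 j).left q *
              antipode (R := R) ((ra2 i).right p * (rb2 j).right q)))
          = ∑ j ∈ rb.index, ∑ q ∈ (rb2 j).index, ∑ i ∈ ra.index, ∑ p ∈ (ra1 i).index,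
              (antipode (R := R) (rb.left j) * antipode (R := R) ((ra1 i).left p)) *
                ((ra1 i).right p * ((rb2 j).left q *
                  antipode (R := R) (ra.right i * (rb2 j).right q))) := by
        refine Finset.sum_congr rfl fun j _ => Finset.sum_congr rfl fun q _ => ?_
        have h2 := (renumber ra ra1 ra2 (tri (antipode (R := R) (rb.left j)) ((rb2 j).left q)
          (antipode (R := R) ∘ₗ LinearMap.mulRight R ((rb2 j).right q)))).symm
        simpa only [tri_apply, LinearMap.comp_apply, LinearMap.mulRight_apply] using h2
      _ = ∑ j ∈ rb.index, ∑ q ∈ (rb2 j).index, ∑ i ∈ ra.index,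
            Coalgebra.counit (R := R) (ra.left i) •
              (antipode (R := R) (rb.left j) * ((rb2 j).left q *
                antipode (R := R) (ra.right i * (rb2 j).right q))) := by
        refine Finset.sum_congr rfl fun j _ => Finset.sum_congr rfl fun q _ =>
          Finset.sum_congr rfl fun i _ => ?_
        have regroup : ∀ p ∈ (ra1 i).index,
            (antipode (R := R) (rb.left j) * antipode (R := R) ((ra1 i).left p)) *
              ((ra1 i).right p * ((rb2 j).left q *
                antipode (R := R) (ra.right i * (rb2 j).right q)))
            = antipode (R := R) (rb.left j) *
                ((antipode (R := R) ((ra1 i).left p) * (ra1 i).right p) *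
                  ((rb2 j).left q * antipode (R := R) (ra.right i * (rb2 j).right q))) := by
          intro p _; rw [mul_assoc, mul_assoc]
        rw [Finset.sum_congr rfl regroup, ← Finset.mul_sum, ← Finset.sum_mul,
          sum_antipode_mul_eq_smul (R := R) (ra1 i), smul_mul_assoc, one_mul, mul_smul_comm]
      _ = ∑ i ∈ ra.index, ∑ j ∈ rb.index, ∑ q ∈ (rb2 j).index,
            Coalgebra.counit (R := R) (ra.left i) •
              (antipode (R := R) (rb.left j) * ((rb2 j).left q *
                antipode (R := R) (ra.right i * (rb2 j).right q))) := by
        exact (Finset.sum_congr rfl fun j _ => Finset.sum_comm).trans Finset.sum_comm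
      _ = ∑ i ∈ ra.index, ∑ j ∈ rb.index, ∑ q ∈ (rb1 j).index,
            Coalgebra.counit (R := R) (ra.left i) •
              (antipode (R := R) ((rb1 j).left q) * ((rb1 j).right q *
                antipode (R := R) (ra.right i * rb.right j))) := by
        refine Finset.sum_congr rfl fun i _ => ?_
        have h2 := (renumber rb rb1 rb2 (tri (Coalgebra.counit (R := R) (ra.left i) • (1 : A)) 1
          (antipode (R := R) ∘ₗ LinearMap.mulLeft R (ra.right i)))).symm
        simpa only [tri_apply, LinearMap.comp_apply, LinearMap.mulLeft_apply, one_mul,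
          smul_mul_assoc] using h2
      _ = ∑ i ∈ ra.index, ∑ j ∈ rb.index,
            (Coalgebra.counit (R := R) (ra.left i) * Coalgebra.counit (R := R) (rb.left j)) •
              antipode (R := R) (ra.right i * rb.right j) := by
        refine Finset.sum_congr rfl fun i _ => Finset.sum_congr rfl fun j _ => ?_
        have regroup : ∀ q ∈ (rb1 j).index,
            Coalgebra.counit (R := R) (ra.left i) •
              (antipode (R := R) ((rb1 j).left q) * ((rb1 j).right q *
                antipode (R := R) (ra.right i * rb.right j)))
            = Coalgebra.counit (R := R) (ra.left i) •
                ((antipode (R := R) ((rb1 j).left q) * (rb1 j).right q) *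
                  antipode (R := R) (ra.right i * rb.right j)) := by
          intro q _; rw [mul_assoc]
        rw [Finset.sum_congr rfl regroup, ← Finset.smul_sum, ← Finset.sum_mul,
          sum_antipode_mul_eq_smul (R := R) (rb1 j), smul_mul_assoc, one_mul, smul_smul]
      _ = antipode (R := R) (a * b) := by
        conv_rhs => rw [← _root_.sum_counit_smul ra, ← _root_.sum_counit_smul rb]
        rw [Finset.sum_mul_sum, map_sum]
        refine Finset.sum_congr rfl fun i _ => ?_
        rw [map_sum]
        refine Finset.sum_congr rfl fun j _ => ?_
        rw [smul_mul_smul_comm, map_smul]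
  rw [← claim2, claim1]

end Aux

section Sinv
variable {R : Type*} [Field R] {A : Type*} [Ring A] [HopfAlgebra R A]
variable (Sinv : A →ₗ[R] A)
  (hSinv₁ : ∀ h : A, Sinv (antipode (R := R) h) = h)
  (hSinv₂ : ∀ h : A, antipode (R := R) (Sinv h) = h)

include hSinv₁ in
lemma antipode_injective : Function.Injective (antipode (R := R) (A := A)) :=
  Function.LeftInverse.injective hSinv₁

lemma antipode_one'' : antipode (R := R) (1 : A) = 1 := by
  have := mul_antipode_rTensor_comul_apply (R := R) (A := A) 1
  simpa [Algebra.TensorProduct.one_def] using this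

include hSinv₁ hSinv₂ in
lemma sum_Sinv_mul {h : A} {ι : Type*} (r : Coalgebra.Repr R h ι) :
    ∑ i ∈ r.index, Sinv (r.right i) * r.left i = Coalgebra.counit (R := R) h • 1 := by
  apply antipode_injective (R := R) Sinv hSinv₁
  rw [map_sum, map_smul, antipode_one'']
  calc ∑ i ∈ r.index, antipode (R := R) (Sinv (r.right i) * r.left i)
      = ∑ i ∈ r.index, antipode (R := R) (r.left i) * r.right i := by
        refine Finset.sum_congr rfl fun i _ => ?_
        rw [antipode_mul_anti, hSinv₂]
    _ = Coalgebra.counit (R := R) h • 1 := sum_antipode_mul_eq_smul r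

include hSinv₁ hSinv₂ in
lemma sum_mul_Sinv {h : A} {ι : Type*} (r : Coalgebra.Repr R h ι) :
    ∑ i ∈ r.index, r.right i * Sinv (r.left i) = Coalgebra.counit (R := R) h • 1 := by
  apply antipode_injective (R := R) Sinv hSinv₁
  rw [map_sum, map_smul, antipode_one'']
  calc ∑ i ∈ r.index, antipode (R := R) (r.right i * Sinv (r.left i))
      = ∑ i ∈ r.index, r.left i * antipode (R := R) (r.right i) := by
        refine Finset.sum_congr rfl fun i _ => ?_
        rw [antipode_mul_anti, hSinv₂]
    _ = Coalgebra.counit (R := R) h • 1 := sum_mul_antipode_eq_smul r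

end Sinv

section Main
variable {R : Type*} [Field R] {A : Type*} [Ring A] [HopfAlgebra R A]

lemma exists_fin_comul' (h : A) :
    ∃ (m : ℕ) (a b : Fin m → A), Coalgebra.comul (R := R) h = ∑ i, a i ⊗ₜ[R] b i := by
  obtain ⟨S, hS⟩ := TensorProduct.exists_finset (R := R) (Coalgebra.comul (R := R) h)
  refine ⟨S.card, fun j => ((S.equivFin.symm j) : A × A).1,
    fun j => ((S.equivFin.symm j) : A × A).2, ?_⟩
  rw [hS, ← Finset.sum_attach S (fun i => i.1 ⊗ₜ[R] i.2)]
  exact (Equiv.sum_comp S.equivFin.symm (fun i => (i : A × A).1 ⊗ₜ[R] (i : A × A).2)).symm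

/-- The linear map `h ↦ h • x`. -/
def smulLin {X : Type*} [AddCommGroup X] [Module R X] [Module A X] [IsScalarTower R A X]
    (x : X) : A →ₗ[R] X where
  toFun h := h • x
  map_add' a b := add_smul a b x
  map_smul' c a := smul_assoc c a x

@[simp] lemma smulLin_apply {X : Type*} [AddCommGroup X] [Module R X] [Module A X]
    [IsScalarTower R A X] (x : X) (h : A) : smulLin (R := R) x h = h • x := rfl

end Main

/-- `_H(X ⊗ Y) ≅ X^R ⊗_H Y`, where `X^R` is `X` with right action
`x·h := S⁻¹(h)·x`. -/
theorem statement18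
    {H : Type*} [Ring H] [HopfAlgebra k H]
    (Sinv : H →ₗ[k] H)
    (hSinv₁ : ∀ h : H, Sinv (HopfAlgebra.antipode (R := k) h) = h)
    (hSinv₂ : ∀ h : H, HopfAlgebra.antipode (R := k) (Sinv h) = h)
    {X : Type*} [AddCommGroup X] [Module k X] [Module H X] [IsScalarTower k H X]
    {Y : Type*} [AddCommGroup Y] [Module k Y] [Module H Y] [IsScalarTower k H Y]
    (La : H → X ⊗[k] Y →ₗ[k] X ⊗[k] Y)
    (hLa : ∀ (h : H) (x : X) (y : Y) (m : ℕ) (a b : Fin m → H),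
      Coalgebra.comul h = ∑ i, a i ⊗ₜ[k] b i →
      La h (x ⊗ₜ[k] y) = ∑ i, (a i • x) ⊗ₜ[k] (b i • y)) :
    ∀ (J₁ J₂ : Submodule k (X ⊗[k] Y)),
      J₁ = Submodule.span k
        {z | ∃ (h : H) (ζ : X ⊗[k] Y), z = Coalgebra.counit (R := k) h • ζ - La h ζ} →
      J₂ = Submodule.span k
        {z | ∃ (h : H) (x : X) (y : Y), z = (Sinv h • x) ⊗ₜ[k] y - x ⊗ₜ[k] (h • y)} →
      ∃ e : ((X ⊗[k] Y) ⧸ J₁) ≃ₗ[k] ((X ⊗[k] Y) ⧸ J₂),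
        ∀ ζ : X ⊗[k] Y, e (Submodule.Quotient.mk ζ) = Submodule.Quotient.mk ζ := by
  intro J₁ J₂ hJ₁ hJ₂
  have key : J₁ = J₂ := by
    rw [hJ₁, hJ₂]
    apply le_antisymm
    · rw [Submodule.span_le]
      rintro _ ⟨h, ζ, rfl⟩
      induction ζ using TensorProduct.induction_on with
      | zero => simpa using Submodule.zero_mem _
      | tmul x y =>
        obtain ⟨m, fa, fb, hco⟩ := exists_fin_comul' (R := k) h
        have hla := hLa h x y m fa fb hco
        have hmem : ∀ i : Fin m,
            (Sinv (fb i) • (fa i • x)) ⊗ₜ[k] y - (fa i • x) ⊗ₜ[k] (fb i • y)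
              ∈ Submodule.span k
                {z | ∃ (h : H) (x : X) (y : Y), z = (Sinv h • x) ⊗ₜ[k] y - x ⊗ₜ[k] (h • y)} :=
          fun i => Submodule.subset_span ⟨fb i, fa i • x, y, rfl⟩
        have hsum := Submodule.sum_mem _ (fun i (_ : i ∈ Finset.univ) => hmem i)
        have hS1 : (∑ i : Fin m, Sinv (fb i) * fa i) = Coalgebra.counit (R := k) h • 1 :=
          sum_Sinv_mul Sinv hSinv₁ hSinv₂ ⟨Finset.univ, fa, fb, hco.symm⟩
        have hA : (∑ i : Fin m, (Sinv (fb i) • (fa i • x)) ⊗ₜ[k] y)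
            = Coalgebra.counit (R := k) h • (x ⊗ₜ[k] y) := by
          have e1 : ∀ i : Fin m, Sinv (fb i) • (fa i • x) = (Sinv (fb i) * fa i) • x :=
            fun i => (mul_smul _ _ _).symm
          simp_rw [e1]
          rw [← TensorProduct.sum_tmul, ← Finset.sum_smul, hS1, smul_assoc, one_smul, smul_tmul']
        have goal_eq : Coalgebra.counit (R := k) h • (x ⊗ₜ[k] y) - La h (x ⊗ₜ[k] y)
            = ∑ i : Fin m,
                ((Sinv (fb i) • (fa i • x)) ⊗ₜ[k] y - (fa i • x) ⊗ₜ[k] (fb i • y)) := by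
          rw [Finset.sum_sub_distrib, hA, ← hla]
        rw [goal_eq]; exact hsum
      | add u v hu hv =>
        rw [map_add, smul_add, add_sub_add_comm]
        exact Submodule.add_mem _ hu hv
    · rw [Submodule.span_le]
      rintro _ ⟨h, x, y, rfl⟩
      obtain ⟨M, fa0, fb0, hco0⟩ := exists_fin_comul' (R := k) h
      choose mm fc fd hcd using fun i : Fin M => exists_fin_comul' (R := k) (fb0 i)
      let r1 : (i : Fin M) → Coalgebra.Repr k (fa0 i) (H × H) := fun i => ℛ k (fa0 i)
      let n : H ⊗[k] H →ₗ[k] H :=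
        LinearMap.mul' k H ∘ₗ TensorProduct.map LinearMap.id Sinv ∘ₗ
          (TensorProduct.comm k H H).toLinearMap
      let T : H ⊗[k] (H ⊗[k] H) →ₗ[k] X ⊗[k] Y :=
        TensorProduct.map (smulLin x) (smulLin y) ∘ₗ
          TensorProduct.map n LinearMap.id ∘ₗ (TensorProduct.assoc k H H H).symm.toLinearMap
      have hT : ∀ α β γ : H, T (α ⊗ₜ[k] (β ⊗ₜ[k] γ)) = ((β * Sinv α) • x) ⊗ₜ[k] (γ • y) := by
        intro α β γ; simp [T, n]
      have hmem : ∀ i : Fin M,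
          Coalgebra.counit (R := k) (fb0 i) • ((Sinv (fa0 i) • x) ⊗ₜ[k] y)
              - La (fb0 i) ((Sinv (fa0 i) • x) ⊗ₜ[k] y)
            ∈ Submodule.span k
              {z | ∃ (h : H) (ζ : X ⊗[k] Y), z = Coalgebra.counit (R := k) h • ζ - La h ζ} :=
        fun i => Submodule.subset_span ⟨fb0 i, (Sinv (fa0 i) • x) ⊗ₜ[k] y, rfl⟩
      have hsum := Submodule.sum_mem _ (fun i (_ : i ∈ Finset.univ) => hmem i)
      have part1 : (∑ i : Fin M,
          Coalgebra.counit (R := k) (fb0 i) • ((Sinv (fa0 i) • x) ⊗ₜ[k] y))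
          = (Sinv h • x) ⊗ₜ[k] y := by
        have e1 : ∀ i : Fin M,
            Coalgebra.counit (R := k) (fb0 i) • ((Sinv (fa0 i) • x) ⊗ₜ[k] y)
              = ((Coalgebra.counit (R := k) (fb0 i) • Sinv (fa0 i)) • x) ⊗ₜ[k] y := by
          intro i; rw [smul_tmul', ← smul_assoc]
        have e2 : (∑ i : Fin M, Coalgebra.counit (R := k) (fb0 i) • fa0 i) = h :=
          sum_smul_counit ⟨Finset.univ, fa0, fb0, hco0.symm⟩
        simp_rw [e1, ← map_smul]
        rw [← TensorProduct.sum_tmul, ← Finset.sum_smul, ← map_sum, e2]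
      have part2 : (∑ i : Fin M, La (fb0 i) ((Sinv (fa0 i) • x) ⊗ₜ[k] y))
          = x ⊗ₜ[k] (h • y) := by
        have hlai : ∀ i : Fin M, La (fb0 i) ((Sinv (fa0 i) • x) ⊗ₜ[k] y)
            = ∑ p : Fin (mm i), (fc i p • (Sinv (fa0 i) • x)) ⊗ₜ[k] (fd i p • y) :=
          fun i => hLa (fb0 i) _ y (mm i) (fc i) (fd i) (hcd i)
        have hren : (∑ i : Fin M, ∑ p ∈ (r1 i).index,
              T ((r1 i).left p ⊗ₜ[k] ((r1 i).right p ⊗ₜ[k] fb0 i)))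
            = ∑ i : Fin M, ∑ p : Fin (mm i), T (fa0 i ⊗ₜ[k] (fc i p ⊗ₜ[k] fd i p)) :=
          renumber ⟨Finset.univ, fa0, fb0, hco0.symm⟩ r1
            (fun i => ⟨Finset.univ, fc i, fd i, (hcd i).symm⟩) T
        calc (∑ i : Fin M, La (fb0 i) ((Sinv (fa0 i) • x) ⊗ₜ[k] y))
            = ∑ i : Fin M, ∑ p : Fin (mm i), T (fa0 i ⊗ₜ[k] (fc i p ⊗ₜ[k] fd i p)) := by
              refine Finset.sum_congr rfl fun i _ => ?_
              rw [hlai i]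
              refine Finset.sum_congr rfl fun p _ => ?_
              rw [hT, mul_smul]
          _ = ∑ i : Fin M, ∑ p ∈ (r1 i).index,
                T ((r1 i).left p ⊗ₜ[k] ((r1 i).right p ⊗ₜ[k] fb0 i)) := hren.symm
          _ = ∑ i : Fin M,
                ((Coalgebra.counit (R := k) (fa0 i) • (1 : H)) • x) ⊗ₜ[k] (fb0 i • y) := by
              refine Finset.sum_congr rfl fun i _ => ?_
              have e3 : ∀ p ∈ (r1 i).index,
                  T ((r1 i).left p ⊗ₜ[k] ((r1 i).right p ⊗ₜ[k] fb0 i))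
                    = (((r1 i).right p * Sinv ((r1 i).left p)) • x) ⊗ₜ[k] (fb0 i • y) :=
                fun p _ => hT _ _ _
              rw [Finset.sum_congr rfl e3, ← TensorProduct.sum_tmul, ← Finset.sum_smul,
                sum_mul_Sinv Sinv hSinv₁ hSinv₂ (r1 i)]
          _ = ∑ i : Fin M, Coalgebra.counit (R := k) (fa0 i) • (x ⊗ₜ[k] (fb0 i • y)) := by
              refine Finset.sum_congr rfl fun i _ => ?_
              rw [smul_assoc, one_smul, smul_tmul']
          _ = x ⊗ₜ[k] ((∑ i : Fin M, Coalgebra.counit (R := k) (fa0 i) • fb0 i) • y) := by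
              rw [Finset.sum_smul, TensorProduct.tmul_sum]
              refine Finset.sum_congr rfl fun i _ => ?_
              rw [smul_assoc]
              exact (TensorProduct.tmul_smul (Coalgebra.counit (R := k) (fa0 i)) x
                (fb0 i • y)).symm
          _ = x ⊗ₜ[k] (h • y) := by
              have e4 : (∑ i : Fin M, Coalgebra.counit (R := k) (fa0 i) • fb0 i) = h :=
                _root_.sum_counit_smul ⟨Finset.univ, fa0, fb0, hco0.symm⟩
              rw [e4]
      have goal_eq : (Sinv h • x) ⊗ₜ[k] y - x ⊗ₜ[k] (h • y)
          = ∑ i : Fin M,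
              (Coalgebra.counit (R := k) (fb0 i) • ((Sinv (fa0 i) • x) ⊗ₜ[k] y)
                - La (fb0 i) ((Sinv (fa0 i) • x) ⊗ₜ[k] y)) := by
        rw [Finset.sum_sub_distrib, part1, part2]
      rw [goal_eq]; exact hsum
  exact ⟨Submodule.quotEquivOfEq J₁ J₂ key, fun ζ => Submodule.quotEquivOfEq_mk J₁ J₂ key ζ⟩
end
end
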